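/- arXiv:2110.08108 — 5 statements merged into one kernel-verified Lean document; each statement's English description precedes it below -/
import Mathlib

section
/- For every positive integer n, the sum of mex(π) over all partitions π of n equals the number of partitions of n into distinct parts where each part comes in one of two colors. -/
open Finset

/-- The minimal excludant of a partition: the least positive integer not a part. -/
noncomputable def mex {n : ℕ} (π : Nat.Partition n) : ℕ :=
  sInf {m : ℕ | 0 < m ∧ m ∉ π.parts}

/-- Number of partitions of `n` with minimal excludant `m`. -/
noncomputable def pmex (m n : ℕ) : ℕ :=
  ((Finset.univ : Finset (Nat.Partition n)).filter (fun π => mex π = m)).card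

/-- The partition function, extended by `0` on negative integers. -/
noncomputable def pz (k : ℤ) : ℕ := if 0 ≤ k then Fintype.card (Nat.Partition k.toNat) else 0

/-- Number of partitions of `m` into distinct parts. -/
def qdist (m : ℕ) : ℕ := (Nat.Partition.distincts m).card

/-- A two-colored distinct-parts partition of `n`: a set of distinct (part, color)
pairs with positive parts summing to `n`. -/
def IsTCD (n : ℕ) (s : Finset (ℕ × Fin 2)) : Prop :=
  (∀ p ∈ s, 0 < p.1) ∧ ∑ p ∈ s, p.1 = n

noncomputable def D2 (n : ℕ) : ℕ := Set.ncard {s : Finset (ℕ × Fin 2) | IsTCD n s}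
noncomputable def D2e (n : ℕ) : ℕ :=
  Set.ncard {s : Finset (ℕ × Fin 2) | IsTCD n s ∧ Even s.card}
noncomputable def D2o (n : ℕ) : ℕ :=
  Set.ncard {s : Finset (ℕ × Fin 2) | IsTCD n s ∧ Odd s.card}

namespace SMexAux

/-- triangular numbers -/
def T (j : ℕ) : ℕ := ∑ i ∈ Finset.range (j+1), i

lemma T_succ (j : ℕ) : T (j+1) = T j + (j+1) := Finset.sum_range_succ _ _

lemma T_zero : T 0 = 0 := rfl

lemma le_T (j : ℕ) : j ≤ T j := by
  induction j with
  | zero => simp [T_zero]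
  | succ k ih => rw [T_succ]; omega

lemma T_mono {a b : ℕ} (h : a ≤ b) : T a ≤ T b := by
  induction b with
  | zero => simp_all
  | succ k ih =>
    rcases Nat.lt_or_ge a (k+1) with h' | h'
    · have := ih (by omega); rw [T_succ]; omega
    · have : a = k+1 := by omega
      subst this; rfl

lemma two_T (j : ℕ) : 2 * T j = j * (j+1) := by
  induction j with
  | zero => rfl
  | succ k ih => rw [T_succ]; nlinarith

lemma ID1 (b j : ℕ) : T (b + j) + T b = T j + b * (b + j + 1) := by
  have h1 := two_T (b+j); have h2 := two_T b; have h3 := two_T j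
  nlinarith

lemma ID2 (b j : ℕ) : T (b + j + 1) + T b = T j + (b+1) * (b + j + 1) := by
  have h1 := two_T (b+j+1); have h2 := two_T b; have h3 := two_T j
  nlinarith

lemma T_eq_Icc (s : ℕ) : T s = ∑ i ∈ Finset.Icc 1 s, i := by
  induction s with
  | zero => rfl
  | succ k ih =>
    rw [T_succ, ih]
    rw [show Finset.Icc 1 (k+1) = insert (k+1) (Finset.Icc 1 k) by
      ext x; simp [Finset.mem_Icc, Finset.mem_insert]; omega]
    rw [Finset.sum_insert (by simp)]
    omega

/-- a downward-closed subset of `Icc 1 N` is an initial interval -/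
lemma dc_eq_Icc {N : ℕ} {S : Finset ℕ} (hS : S ⊆ Finset.Icc 1 N)
    (hdc : ∀ w ∈ S, ∀ w', 1 ≤ w' → w' ≤ w → w' ∈ S) : S = Finset.Icc 1 S.card := by
  rcases S.eq_empty_or_nonempty with rfl | hne
  · simp
  · have hmax := S.max'_mem hne
    have h1 : S = Finset.Icc 1 (S.max' hne) := by
      apply Finset.Subset.antisymm
      · intro x hx
        have := hS hx
        simp only [Finset.mem_Icc] at this ⊢
        exact ⟨this.1, S.le_max' x hx⟩
      · intro x hx
        simp only [Finset.mem_Icc] at hx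
        exact hdc _ hmax x hx.1 hx.2
    have hm1 : 1 ≤ S.max' hne := by
      have := hS hmax; simp only [Finset.mem_Icc] at this; exact this.1
    have hcard : S.card = S.max' hne := by
      have h2 := congrArg Finset.card h1
      rw [Nat.card_Icc] at h2
      omega
    conv_rhs => rw [hcard]
    exact h1

lemma mem_dc_iff {N : ℕ} {S : Finset ℕ} (hS : S ⊆ Finset.Icc 1 N)
    (hdc : ∀ w ∈ S, ∀ w', 1 ≤ w' → w' ≤ w → w' ∈ S) (w : ℕ) :
    w ∈ S ↔ 1 ≤ w ∧ w ≤ S.card := by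
  conv_lhs => rw [dc_eq_Icc hS hdc]
  exact Finset.mem_Icc

/-- conjugate / sorted-access operator -/
def cnj (N : ℕ) (g : ℕ → ℕ) (v : ℕ) : ℕ :=
  ((Finset.Icc 1 N).filter (fun i => v ≤ g i)).card

lemma cnj_galois {N : ℕ} {g : ℕ → ℕ} (hg : ∀ a b, 1 ≤ a → a ≤ b → g b ≤ g a)
    {u v : ℕ} (hu : 1 ≤ u) (huN : u ≤ N) :
    u ≤ cnj N g v ↔ v ≤ g u := by
  have hdc : ∀ w ∈ (Finset.Icc 1 N).filter (fun i => v ≤ g i),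
      ∀ w', 1 ≤ w' → w' ≤ w → w' ∈ (Finset.Icc 1 N).filter (fun i => v ≤ g i) := by
    intro w hw w' h1 h2
    simp only [Finset.mem_filter, Finset.mem_Icc] at hw ⊢
    exact ⟨⟨h1, le_trans h2 hw.1.2⟩, le_trans hw.2 (hg w' w h1 h2)⟩
  have := mem_dc_iff (Finset.filter_subset _ _) hdc u
  unfold cnj
  constructor
  · intro h
    have hm := this.mpr ⟨hu, h⟩
    simp only [Finset.mem_filter, Finset.mem_Icc] at hm
    exact hm.2
  · intro h
    have hm : u ∈ (Finset.Icc 1 N).filter (fun i => v ≤ g i) := by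
      simp only [Finset.mem_filter, Finset.mem_Icc]
      exact ⟨⟨hu, huN⟩, h⟩
    exact (this.mp hm).2

lemma cnj_le (N : ℕ) (g : ℕ → ℕ) (v : ℕ) : cnj N g v ≤ N := by
  unfold cnj
  calc ((Finset.Icc 1 N).filter (fun i => v ≤ g i)).card ≤ (Finset.Icc 1 N).card :=
        Finset.card_filter_le _ _
    _ = N := by rw [Nat.card_Icc]; omega

lemma cnj_anti (N : ℕ) (g : ℕ → ℕ) {v w : ℕ} (h : v ≤ w) : cnj N g w ≤ cnj N g v := by
  apply Finset.card_le_card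
  apply Finset.monotone_filter_right
  intro i _ hi; exact le_trans h hi

lemma cnj_eq_zero {N : ℕ} {g : ℕ → ℕ} {K v : ℕ} (hbd : ∀ i, 1 ≤ i → g i ≤ K)
    (hv : K < v) : cnj N g v = 0 := by
  unfold cnj
  rw [Finset.card_eq_zero]
  apply Finset.filter_false_of_mem
  intro i hi
  simp only [Finset.mem_Icc] at hi
  have := hbd i hi.1
  omega

lemma filter_le_Icc_card {N K : ℕ} (h : K ≤ N) :
    ((Finset.Icc 1 N).filter (fun v => v ≤ K)).card = K := by
  have : (Finset.Icc 1 N).filter (fun v => v ≤ K) = Finset.Icc 1 K := by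
    ext x; simp only [Finset.mem_filter, Finset.mem_Icc]; omega
  rw [this, Nat.card_Icc]; omega

lemma cnj_cnj {N : ℕ} {g : ℕ → ℕ} (hg : ∀ a b, 1 ≤ a → a ≤ b → g b ≤ g a)
    (hbd : ∀ i, 1 ≤ i → g i ≤ N) {u : ℕ} (hu : 1 ≤ u) (huN : u ≤ N) :
    cnj N (cnj N g) u = g u := by
  show ((Finset.Icc 1 N).filter (fun v => u ≤ cnj N g v)).card = g u
  have : ∀ v ∈ Finset.Icc 1 N, (u ≤ cnj N g v ↔ v ≤ g u) := by
    intro v hv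
    exact cnj_galois hg hu huN
  rw [Finset.filter_congr (fun v hv => this v hv)]
  exact filter_le_Icc_card (hbd u hu)

lemma sum_cnj {N : ℕ} (g : ℕ → ℕ) (hbd : ∀ i, 1 ≤ i → i ≤ N → g i ≤ N) :
    ∑ v ∈ Finset.Icc 1 N, cnj N g v = ∑ i ∈ Finset.Icc 1 N, g i := by
  unfold cnj
  have : ∀ v, ((Finset.Icc 1 N).filter (fun i => v ≤ g i)).card
      = ∑ i ∈ Finset.Icc 1 N, if v ≤ g i then 1 else 0 := by
    intro v; rw [Finset.card_filter]
  simp_rw [this]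
  rw [Finset.sum_comm]
  apply Finset.sum_congr rfl
  intro i hi
  simp only [Finset.mem_Icc] at hi
  rw [← Finset.card_filter]
  exact filter_le_Icc_card (hbd i hi.1 hi.2)


/-! ### multiset counting function -/

def cntf (M : Multiset ℕ) (v : ℕ) : ℕ := (M.filter (fun x => v ≤ x)).card

lemma cntf_anti (M : Multiset ℕ) : ∀ a b, 1 ≤ a → a ≤ b → cntf M b ≤ cntf M a := by
  intro a b _ h
  apply Multiset.card_le_card
  apply Multiset.monotone_filter_right
  intro x hx; exact le_trans h hx

lemma cntf_add (M M' : Multiset ℕ) (v : ℕ) :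
    cntf (M + M') v = cntf M v + cntf M' v := by
  unfold cntf; rw [Multiset.filter_add, Multiset.card_add]

lemma cntf_le_card (M : Multiset ℕ) (v : ℕ) : cntf M v ≤ Multiset.card M :=
  Multiset.card_le_card (Multiset.filter_le _ _)

lemma cntf_zero {M : Multiset ℕ} {K v : ℕ} (h : ∀ x ∈ M, x ≤ K) (hv : K < v) :
    cntf M v = 0 := by
  unfold cntf
  rw [Multiset.card_eq_zero, Multiset.filter_eq_nil]
  intro x hx hc
  have := h x hx; omega

lemma cntf_cons (x : ℕ) (M : Multiset ℕ) (v : ℕ) :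
    cntf (x ::ₘ M) v = cntf M v + if v ≤ x then 1 else 0 := by
  unfold cntf
  rw [Multiset.filter_cons]
  by_cases hc : v ≤ x
  · rw [if_pos hc, if_pos hc, Multiset.card_add, Multiset.card_singleton]; omega
  · rw [if_neg hc, if_neg hc, Multiset.card_add, Multiset.card_zero]; omega

lemma cntf_count (M : Multiset ℕ) (v : ℕ) : cntf M v = cntf M (v+1) + M.count v := by
  induction M using Multiset.induction_on with
  | empty => simp [cntf]
  | cons x M ih =>
    rw [cntf_cons, cntf_cons, Multiset.count_cons]
    split_ifs <;> omega

lemma cntf_pos_exists {M : Multiset ℕ} {v : ℕ} (h : 0 < cntf M v) :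
    ∃ x ∈ M, v ≤ x := by
  unfold cntf at h
  rw [Multiset.card_pos] at h
  obtain ⟨x, hx⟩ := Multiset.exists_mem_of_ne_zero h
  rw [Multiset.mem_filter] at hx
  exact ⟨x, hx.1, hx.2⟩

lemma cntf_one {M : Multiset ℕ} (h : ∀ x ∈ M, 1 ≤ x) : cntf M 1 = Multiset.card M := by
  unfold cntf
  rw [Multiset.filter_eq_self.mpr h]

lemma sum_cntf {N : ℕ} (M : Multiset ℕ) (h : ∀ x ∈ M, x ≤ N) :
    ∑ v ∈ Finset.Icc 1 N, cntf M v = M.sum := by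
  induction M using Multiset.induction_on with
  | empty => simp [cntf]
  | cons x M ih =>
    have hx := h x (Multiset.mem_cons_self _ _)
    have hM : ∀ y ∈ M, y ≤ N := fun y hy => h y (Multiset.mem_cons_of_mem hy)
    simp_rw [cntf_cons]
    rw [Finset.sum_add_distrib, ih hM, Multiset.sum_cons]
    rw [← Finset.card_filter, filter_le_Icc_card hx]
    omega

lemma multiset_eq_of_cntf {M M' : Multiset ℕ} (hM : ∀ x ∈ M, 1 ≤ x) (hM' : ∀ x ∈ M', 1 ≤ x)
    (h : ∀ v, 1 ≤ v → cntf M v = cntf M' v) : M = M' := by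
  rw [Multiset.ext]
  intro v
  rcases Nat.eq_zero_or_pos v with rfl | hv
  · rw [Multiset.count_eq_zero_of_notMem, Multiset.count_eq_zero_of_notMem]
    · intro hc; exact absurd (hM' 0 hc) (by omega)
    · intro hc; exact absurd (hM 0 hc) (by omega)
  · have h1 := cntf_count M v
    have h2 := cntf_count M' v
    have h3 := h v hv
    have h4 := h (v+1) (by omega)
    omega

/-! ### building a multiset from a counting function -/

def msof (N : ℕ) (g : ℕ → ℕ) : Multiset ℕ :=
  ∑ w ∈ Finset.Icc 1 N, Multiset.replicate (g w - g (w+1)) w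

lemma mem_msof {N : ℕ} {g : ℕ → ℕ} {x : ℕ} (hx : x ∈ msof N g) : 1 ≤ x ∧ x ≤ N := by
  unfold msof at hx
  rw [Multiset.mem_sum] at hx
  obtain ⟨w, hw, hx⟩ := hx
  rw [Multiset.eq_of_mem_replicate hx]
  simpa using hw

lemma tele (g : ℕ → ℕ) (hg : ∀ a b, 1 ≤ a → a ≤ b → g b ≤ g a) :
    ∀ N v, 1 ≤ v → v ≤ N + 1 → ∑ w ∈ Finset.Icc v N, (g w - g (w+1)) = g v - g (N+1) := by
  intro N
  induction N with
  | zero =>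
    intro v hv hv2
    have : v = 1 := by omega
    subst this
    rw [Finset.Icc_eq_empty (by omega)]
    simp
  | succ k ih =>
    intro v hv hv2
    rcases Nat.lt_or_ge (k+1) v with h | h
    · have : v = k + 2 := by omega
      subst this
      rw [Finset.Icc_eq_empty (by omega)]
      simp
    · rw [Finset.sum_Icc_succ_top h, ih v hv (by omega)]
      have h1 : g (k+1+1) ≤ g (k+1) := hg _ _ (by omega) (by omega)
      have h2 : g (k+1) ≤ g v := hg _ _ hv h
      omega

lemma count_msof {N : ℕ} (g : ℕ → ℕ) {w : ℕ} (hw : 1 ≤ w) (hwN : w ≤ N) :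
    (msof N g).count w = g w - g (w+1) := by
  unfold msof
  rw [Multiset.count_sum']
  rw [Finset.sum_eq_single w]
  · rw [Multiset.count_replicate_self]
  · intro b _ hne
    rw [Multiset.count_replicate, if_neg (by omega)]
  · intro hc
    exact absurd (Finset.mem_Icc.mpr ⟨hw, hwN⟩) hc

lemma cntf_msof {N : ℕ} {g : ℕ → ℕ} (hg : ∀ a b, 1 ≤ a → a ≤ b → g b ≤ g a)
    (h0 : ∀ v, N < v → g v = 0) {v : ℕ} (hv : 1 ≤ v) : cntf (msof N g) v = g v := by
  rcases Nat.lt_or_ge N v with h | h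
  · rw [h0 v h]
    exact cntf_zero (fun x hx => (mem_msof hx).2) h
  · have hadd : ∀ (s : Finset ℕ) (f : ℕ → Multiset ℕ),
        cntf (∑ w ∈ s, f w) v = ∑ w ∈ s, cntf (f w) v := by
      intro s f
      induction s using Finset.cons_induction with
      | empty => simp [cntf]
      | cons a s ha ih => rw [Finset.sum_cons, cntf_add, ih, Finset.sum_cons]
    unfold msof
    rw [hadd]
    have hrep : ∀ w ∈ Finset.Icc 1 N, cntf (Multiset.replicate (g w - g (w+1)) w) v
        = if v ≤ w then g w - g (w+1) else 0 := by
      intro w _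
      unfold cntf
      by_cases hc : v ≤ w
      · rw [if_pos hc, Multiset.filter_eq_self.mpr, Multiset.card_replicate]
        intro x hx
        rw [Multiset.eq_of_mem_replicate hx]
        exact hc
      · rw [if_neg hc, Multiset.card_eq_zero, Multiset.filter_eq_nil]
        intro x hx
        rw [Multiset.eq_of_mem_replicate hx]
        omega
    rw [Finset.sum_congr rfl hrep, ← Finset.sum_filter]
    have hicc : (Finset.Icc 1 N).filter (fun w => v ≤ w) = Finset.Icc v N := by
      ext x; simp only [Finset.mem_filter, Finset.mem_Icc]; omega
    rw [hicc, tele g hg N v hv (by omega), h0 (N+1) (by omega)]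
    omega

lemma sum_msof {N : ℕ} {g : ℕ → ℕ} (hg : ∀ a b, 1 ≤ a → a ≤ b → g b ≤ g a)
    (h0 : ∀ v, N < v → g v = 0) : (msof N g).sum = ∑ v ∈ Finset.Icc 1 N, g v := by
  rw [← sum_cntf (N := N) _ (fun x hx => (mem_msof hx).2)]
  apply Finset.sum_congr rfl
  intro v hv
  rw [Finset.mem_Icc] at hv
  exact cntf_msof hg h0 hv.1

/-! ### sorted access -/

def srt (N : ℕ) (M : Multiset ℕ) (i : ℕ) : ℕ := cnj N (cntf M) i

lemma srt_galois {N : ℕ} (M : Multiset ℕ) {i v : ℕ} (hv : 1 ≤ v) (hvN : v ≤ N) :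
    v ≤ srt N M i ↔ i ≤ cntf M v :=
  cnj_galois (cntf_anti M) hv hvN

lemma srt_anti (N : ℕ) (M : Multiset ℕ) {i i' : ℕ} (h : i ≤ i') :
    srt N M i' ≤ srt N M i := cnj_anti N _ h

lemma cnj_le_bd {N K : ℕ} {g : ℕ → ℕ} (h0 : ∀ v, K < v → g v = 0) {i : ℕ} (hi : 1 ≤ i) :
    cnj N g i ≤ K := by
  unfold cnj
  have hsub : (Finset.Icc 1 N).filter (fun v => i ≤ g v) ⊆ Finset.Icc 1 K := by
    intro v hv
    simp only [Finset.mem_filter, Finset.mem_Icc] at hv ⊢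
    refine ⟨hv.1.1, ?_⟩
    by_contra hc
    have := h0 v (by omega)
    omega
  calc ((Finset.Icc 1 N).filter (fun v => i ≤ g v)).card ≤ (Finset.Icc 1 K).card :=
        Finset.card_le_card hsub
    _ = K := by rw [Nat.card_Icc]; omega

lemma srt_le_bd {N K : ℕ} {M : Multiset ℕ} (h : ∀ x ∈ M, x ≤ K) {i : ℕ} (hi : 1 ≤ i) :
    srt N M i ≤ K :=
  cnj_le_bd (fun v hv => cntf_zero h hv) hi

lemma srt_zero_of_card {N : ℕ} {M : Multiset ℕ} {i : ℕ} (h : Multiset.card M < i) :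
    srt N M i = 0 :=
  cnj_eq_zero (fun w _ => cntf_le_card M w) h

lemma sum_srt {N : ℕ} {M : Multiset ℕ} (hN : ∀ x ∈ M, x ≤ N) (hc : Multiset.card M ≤ N) :
    ∑ i ∈ Finset.Icc 1 N, srt N M i = M.sum := by
  unfold srt
  rw [sum_cnj _ (fun i _ _ => le_trans (cntf_le_card M i) hc), sum_cntf M hN]

lemma srt_mem {N : ℕ} {M : Multiset ℕ} {i : ℕ} (hi : 1 ≤ i) (hic : i ≤ cntf M 1)
    (hN : ∀ x ∈ M, x ≤ N) (hN1 : 1 ≤ N) : srt N M i ∈ M ∧ 1 ≤ srt N M i := by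
  have hv1 : 1 ≤ srt N M i := (srt_galois M (by omega) hN1).mpr hic
  have hvN : srt N M i ≤ N := cnj_le N _ i
  have h1 : i ≤ cntf M (srt N M i) := (srt_galois M hv1 hvN).mp le_rfl
  have h2 : cntf M (srt N M i + 1) < i := by
    by_contra hc
    push_neg at hc
    rcases Nat.lt_or_ge N (srt N M i + 1) with h | h
    · have := cntf_zero hN h; omega
    · have := (srt_galois M (v := srt N M i + 1) (by omega) h).mpr hc
      omega
  have h3 := cntf_count M (srt N M i)
  have : 0 < M.count (srt N M i) := by omega
  exact ⟨Multiset.count_pos.mp this, hv1⟩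

lemma cntf_window {M : Multiset ℕ} (hnd : M.Nodup) (v d : ℕ) :
    cntf M v ≤ cntf M (v + d) + d := by
  induction d with
  | zero => simp
  | succ k ih =>
    have h1 : cntf M (v + k) ≤ cntf M (v + k + 1) + 1 := by
      have h2 := cntf_count M (v+k)
      have h3 := (Multiset.nodup_iff_count_le_one.mp hnd) (v+k)
      omega
    have : v + (k + 1) = v + k + 1 := by omega
    rw [this]
    omega

lemma srt_gap {N K : ℕ} {M : Multiset ℕ} (hnd : M.Nodup) (hpos : ∀ x ∈ M, 1 ≤ x)
    (hK : ∀ x ∈ M, x ≤ K) (hKN : K + Multiset.card M ≤ N)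
    {a b : ℕ} (ha : 1 ≤ a) (hab : a ≤ b) (hb : b ≤ Multiset.card M) :
    srt N M b + (b - a) ≤ srt N M a := by
  have hN1 : 1 ≤ N := by
    have := cntf_le_card M 1
    have : (1:ℕ) ≤ Multiset.card M := by omega
    omega
  have hb1 : 1 ≤ srt N M b := by
    rw [srt_galois (N := N) M (by omega) hN1]
    rw [cntf_one hpos]; omega
  have hbK : srt N M b ≤ K := srt_le_bd hK (by omega)
  have hbN' : srt N M b ≤ N := by omega
  have h1 : b ≤ cntf M (srt N M b) := (srt_galois (N := N) M hb1 hbN').mp le_rfl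
  have h2 := cntf_window hnd (srt N M b) (b - a)
  have h3 : a ≤ cntf M (srt N M b + (b - a)) := by omega
  rcases Nat.eq_zero_or_pos (b - a) with h | h
  · have : a = b := by omega
    subst this; simp
  · have := (srt_galois (N := N) M (v := srt N M b + (b - a)) (by omega)
      (by omega)).mpr h3
    omega

/-! ### the staircase set construction -/

def AntiOn (h : ℕ → ℕ) (s : ℕ) : Prop := ∀ a b, 1 ≤ a → a ≤ b → b ≤ s → h b ≤ h a

def mkSet (s : ℕ) (h : ℕ → ℕ) : Finset ℕ :=
  (Finset.Icc 1 s).image (fun i => h i + (s + 1 - i))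

lemma mem_mkSet {s : ℕ} {h : ℕ → ℕ} {x : ℕ} :
    x ∈ mkSet s h ↔ ∃ i, 1 ≤ i ∧ i ≤ s ∧ h i + (s + 1 - i) = x := by
  unfold mkSet
  simp only [Finset.mem_image, Finset.mem_Icc]
  constructor
  · rintro ⟨i, ⟨h1, h2⟩, h3⟩; exact ⟨i, h1, h2, h3⟩
  · rintro ⟨i, h1, h2, h3⟩; exact ⟨i, ⟨h1, h2⟩, h3⟩

lemma mkSet_strict {s : ℕ} {h : ℕ → ℕ} (hh : AntiOn h s) {a b : ℕ}
    (ha : 1 ≤ a) (hab : a < b) (hb : b ≤ s) :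
    h b + (s + 1 - b) < h a + (s + 1 - a) := by
  have := hh a b ha (le_of_lt hab) hb
  omega

lemma mkSet_injOn {s : ℕ} {h : ℕ → ℕ} (hh : AntiOn h s) :
    Set.InjOn (fun i => h i + (s + 1 - i)) ↑(Finset.Icc 1 s) := by
  intro a ha b hb hab
  simp only [Finset.coe_Icc, Set.mem_Icc] at ha hb
  by_contra hne
  rcases Nat.lt_or_ge a b with hl | hl
  · have := mkSet_strict hh ha.1 hl hb.2; simp only at hab; omega
  · have hl' : b < a := by omega
    have := mkSet_strict hh hb.1 hl' ha.2; simp only at hab; omega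

lemma card_mkSet {s : ℕ} {h : ℕ → ℕ} (hh : AntiOn h s) : (mkSet s h).card = s := by
  unfold mkSet
  rw [Finset.card_image_of_injOn (mkSet_injOn hh), Nat.card_Icc]
  omega

lemma mkSet_pos {s : ℕ} {h : ℕ → ℕ} {x : ℕ} (hx : x ∈ mkSet s h) : 1 ≤ x := by
  rw [mem_mkSet] at hx
  obtain ⟨i, h1, h2, h3⟩ := hx
  omega

lemma mkSet_le {s : ℕ} {h : ℕ → ℕ} (hh : AntiOn h s) {x : ℕ} (hx : x ∈ mkSet s h) :
    x ≤ h 1 + s := by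
  rw [mem_mkSet] at hx
  obtain ⟨i, h1, h2, h3⟩ := hx
  have := hh 1 i (by omega) h1 h2
  omega

lemma sum_stair (s : ℕ) : ∑ i ∈ Finset.Icc 1 s, (s + 1 - i) = T s := by
  induction s with
  | zero => rfl
  | succ k ih =>
    rw [Finset.sum_Icc_succ_top (by omega), T_succ, ← ih]
    have : ∀ i ∈ Finset.Icc 1 k, (k + 1 + 1 - i) = (k + 1 - i) + 1 := by
      intro i hi; rw [Finset.mem_Icc] at hi; omega
    rw [Finset.sum_congr rfl this, Finset.sum_add_distrib]
    simp [Nat.card_Icc]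
    omega

lemma sum_mkSet {s : ℕ} {h : ℕ → ℕ} (hh : AntiOn h s) :
    ∑ x ∈ mkSet s h, x = (∑ i ∈ Finset.Icc 1 s, h i) + T s := by
  unfold mkSet
  rw [Finset.sum_image (fun x hx y hy hxy => mkSet_injOn hh (by simpa using hx) (by simpa using hy) hxy)]
  rw [Finset.sum_add_distrib, sum_stair]

lemma cntf_mkSet {s : ℕ} {h : ℕ → ℕ} (hh : AntiOn h s) (v : ℕ) :
    cntf (mkSet s h).val v = ((Finset.Icc 1 s).filter (fun i => v ≤ h i + (s + 1 - i))).card := by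
  have : cntf (mkSet s h).val v = ((mkSet s h).filter (fun x => v ≤ x)).card := by
    unfold cntf
    rfl
  rw [this]
  unfold mkSet
  rw [Finset.filter_image]
  rw [Finset.card_image_of_injOn ((mkSet_injOn hh).mono
    (Finset.coe_subset.mpr (Finset.filter_subset _ _)))]

lemma srt_mkSet {N s : ℕ} {h : ℕ → ℕ} (hh : AntiOn h s) (hN : h 1 + s < N)
    {i : ℕ} (hi : 1 ≤ i) (his : i ≤ s) :
    srt N (mkSet s h).val i = h i + (s + 1 - i) := by
  have hfi_pos : 1 ≤ h i + (s + 1 - i) := by omega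
  have hfi_le : h i + (s + 1 - i) ≤ h 1 + s := by
    have := hh 1 i (by omega) hi his
    omega
  have hlow : i ≤ cntf (mkSet s h).val (h i + (s + 1 - i)) := by
    rw [cntf_mkSet hh]
    have hsub : Finset.Icc 1 i ⊆
        (Finset.Icc 1 s).filter (fun i' => h i + (s + 1 - i) ≤ h i' + (s + 1 - i')) := by
      intro x hx
      rw [Finset.mem_Icc] at hx
      simp only [Finset.mem_filter, Finset.mem_Icc]
      have := hh x i hx.1 hx.2 his
      constructor
      · omega
      · omega
    have := Finset.card_le_card hsub
    rw [Nat.card_Icc] at this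
    omega
  have hup : cntf (mkSet s h).val (h i + (s + 1 - i) + 1) < i := by
    rw [cntf_mkSet hh]
    have hsub : (Finset.Icc 1 s).filter (fun i' => h i + (s + 1 - i) + 1 ≤ h i' + (s + 1 - i'))
        ⊆ Finset.Icc 1 (i-1) := by
      intro x hx
      simp only [Finset.mem_filter, Finset.mem_Icc] at hx ⊢
      refine ⟨hx.1.1, ?_⟩
      by_contra hc
      have hxi : i ≤ x := by omega
      have := hh i x hi hxi hx.1.2
      omega
    have := Finset.card_le_card hsub
    rw [Nat.card_Icc] at this
    omega
  have h1 : h i + (s + 1 - i) ≤ srt N (mkSet s h).val i := by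
    rw [srt_galois _ hfi_pos (by omega)]
    exact hlow
  have h2 : srt N (mkSet s h).val i < h i + (s + 1 - i) + 1 := by
    by_contra hc
    push_neg at hc
    have := (srt_galois (N := N) (mkSet s h).val (v := h i + (s + 1 - i) + 1)
      (by omega) (by omega)).mp hc
    omega
  omega

lemma srt_stair {N : ℕ} {A : Finset ℕ} (hpos : ∀ x ∈ A, 1 ≤ x)
    {i : ℕ} (hi : 1 ≤ i) (his : i ≤ A.card) (hcN : A.card ≤ N) :
    A.card + 1 - i ≤ srt N A.val i := by
  have h1 : (A.filter (fun x => ¬ (A.card + 1 - i ≤ x))).card ≤ A.card - i := by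
    have hsub : A.filter (fun x => ¬ (A.card + 1 - i ≤ x)) ⊆ Finset.Icc 1 (A.card - i) := by
      intro x hx
      simp only [Finset.mem_filter, not_le] at hx
      rw [Finset.mem_Icc]
      have := hpos x hx.1
      omega
    have := Finset.card_le_card hsub
    rw [Nat.card_Icc] at this
    omega
  have h2 : (A.filter (fun x => A.card + 1 - i ≤ x)).card
      + (A.filter (fun x => ¬ (A.card + 1 - i ≤ x))).card = A.card :=
    Finset.card_filter_add_card_filter_not _
  have h3 : cntf A.val (A.card + 1 - i) = (A.filter (fun x => A.card + 1 - i ≤ x)).card := rfl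
  rw [srt_galois _ (by omega) (by omega)]
  omega

lemma mkSet_ext {N : ℕ} {A : Finset ℕ} (hpos : ∀ x ∈ A, 1 ≤ x) {K : ℕ}
    (hK : ∀ x ∈ A, x ≤ K) (hKN : K + A.card < N) :
    mkSet A.card (fun i => srt N A.val i - (A.card + 1 - i)) = A := by
  set s := A.card with hs
  have hcN : A.card ≤ N := by
    have := Finset.card_le_card (Finset.subset_iff.mpr (fun x hx => Finset.mem_Icc.mpr ⟨hpos x hx, hK x hx⟩))
    rw [Nat.card_Icc] at this
    omega
  have himg : mkSet s (fun i => srt N A.val i - (s + 1 - i))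
      = (Finset.Icc 1 s).image (fun i => srt N A.val i) := by
    unfold mkSet
    apply Finset.image_congr
    intro i hi
    simp only [Finset.coe_Icc, Set.mem_Icc] at hi
    have := srt_stair hpos hi.1 hi.2 hcN
    beta_reduce
    omega
  rw [himg]
  have hsub : (Finset.Icc 1 s).image (fun i => srt N A.val i) ⊆ A := by
    intro x hx
    rw [Finset.mem_image] at hx
    obtain ⟨i, hi, rfl⟩ := hx
    rw [Finset.mem_Icc] at hi
    have := srt_mem (M := A.val) (N := N) hi.1
      (by rw [cntf_one hpos]; exact hi.2) (fun x hx => le_trans (hK x hx) (by omega)) (by omega)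
    exact this.1
  have hinj : Set.InjOn (fun i => srt N A.val i) ↑(Finset.Icc 1 s) := by
    intro a ha b hb hab
    simp only [Finset.coe_Icc, Set.mem_Icc] at ha hb
    by_contra hne
    beta_reduce at hab
    have hAv : Multiset.card A.val = A.card := rfl
    rcases Nat.lt_or_ge a b with hl | hl
    · have := srt_gap (N := N) A.nodup hpos hK (by omega) ha.1 (le_of_lt hl) hb.2
      omega
    · have hl' : b < a := by omega
      have := srt_gap (N := N) A.nodup hpos hK (by omega) hb.1 (le_of_lt hl') ha.2
      omega
  have hcard : ((Finset.Icc 1 s).image (fun i => srt N A.val i)).card = A.card := by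
    rw [Finset.card_image_of_injOn hinj, Nat.card_Icc]
    omega
  exact Finset.eq_of_subset_of_card_le hsub (by omega)

lemma ext_mkSet {N s : ℕ} {h : ℕ → ℕ} (hh : AntiOn h s) (hN : h 1 + s < N)
    {i : ℕ} (hi : 1 ≤ i) (his : i ≤ s) :
    srt N (mkSet s h).val i - (s + 1 - i) = h i := by
  rw [srt_mkSet hh hN hi his]
  omega


/-! ### Part 3: the mex side -/

lemma card_le_sum_of_pos {M : Multiset ℕ} (h : ∀ x ∈ M, 1 ≤ x) :
    Multiset.card M ≤ M.sum := by
  induction M using Multiset.induction_on with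
  | empty => simp
  | cons a M ih =>
    rw [Multiset.card_cons, Multiset.sum_cons]
    have h1 := h a (Multiset.mem_cons_self _ _)
    have h2 := ih (fun x hx => h x (Multiset.mem_cons_of_mem hx))
    omega

def stair (j : ℕ) : Multiset ℕ := (Finset.Icc 1 j).val

lemma stair_sum (j : ℕ) : (stair j).sum = T j := by
  rw [T_eq_Icc]
  rw [Finset.sum_eq_multiset_sum]
  simp [stair]

lemma stair_count (j x : ℕ) : (stair j).count x = if 1 ≤ x ∧ x ≤ j then 1 else 0 := by
  by_cases h : 1 ≤ x ∧ x ≤ j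
  · rw [if_pos h]
    apply Multiset.count_eq_one_of_mem (Finset.Icc 1 j).nodup
    simpa [stair] using h
  · rw [if_neg h]
    apply Multiset.count_eq_zero_of_notMem
    simp only [stair, Finset.mem_val, Finset.mem_Icc]
    omega

lemma stair_le_iff {j : ℕ} {M : Multiset ℕ} :
    stair j ≤ M ↔ ∀ x, 1 ≤ x → x ≤ j → x ∈ M := by
  rw [Multiset.le_iff_count]
  constructor
  · intro h x h1 h2
    have := h x
    rw [stair_count, if_pos ⟨h1, h2⟩] at this
    rw [← Multiset.count_pos]
    omega
  · intro h x
    rw [stair_count]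
    by_cases hx : 1 ≤ x ∧ x ≤ j
    · rw [if_pos hx]
      rw [Nat.succ_le, Multiset.count_pos]
      exact h x hx.1 hx.2
    · rw [if_neg hx]
      omega

lemma mex_le {n : ℕ} (π : Nat.Partition n) : mex π ≤ n + 1 := by
  apply Nat.sInf_le
  refine ⟨by omega, ?_⟩
  intro hc
  have h1 : (n+1) ≤ π.parts.sum := by
    refine Multiset.single_le_sum (fun y _ => Nat.zero_le y) _ hc
  rw [π.parts_sum] at h1
  omega

lemma lt_mex_iff {n : ℕ} (π : Nat.Partition n) (j : ℕ) :
    j < mex π ↔ ∀ x, 1 ≤ x → x ≤ j → x ∈ π.parts := by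
  constructor
  · intro h x h1 h2
    by_contra hc
    have hmem : x ∈ {m : ℕ | 0 < m ∧ m ∉ π.parts} := ⟨h1, hc⟩
    have := Nat.sInf_le hmem
    unfold mex at h
    omega
  · intro h
    by_contra hc
    push_neg at hc
    have hne : {m : ℕ | 0 < m ∧ m ∉ π.parts}.Nonempty := by
      refine ⟨n+1, by omega, ?_⟩
      intro hmem
      have h1 : (n+1) ≤ π.parts.sum :=
        Multiset.single_le_sum (fun y _ => Nat.zero_le y) _ hmem
      rw [π.parts_sum] at h1
      omega
    have hmem := Nat.sInf_mem hne
    exact hmem.2 (h _ hmem.1 hc)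

lemma sum_mex_eq (n : ℕ) :
    ∑ π : Nat.Partition n, mex π
      = ∑ j ∈ Finset.range (n+1), ((Finset.univ : Finset (Nat.Partition n)).filter
          (fun π => stair j ≤ π.parts)).card := by
  classical
  have hpt : ∀ π : Nat.Partition n,
      mex π = ((Finset.range (n+1)).filter (fun j => stair j ≤ π.parts)).card := by
    intro π
    have h1 : (Finset.range (n+1)).filter (fun j => stair j ≤ π.parts)
        = Finset.range (mex π) := by
      ext j
      simp only [Finset.mem_filter, Finset.mem_range]
      rw [stair_le_iff, ← lt_mex_iff]
      have := mex_le π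
      constructor
      · rintro ⟨_, h3⟩; exact h3
      · intro h2; exact ⟨by omega, h2⟩
    rw [h1, Finset.card_range]
  rw [Finset.sum_congr rfl (fun π _ => hpt π)]
  simp_rw [Finset.card_filter]
  rw [Finset.sum_comm]

lemma stair_filter_empty {n j : ℕ} (hT : n < T j) :
    ((Finset.univ : Finset (Nat.Partition n)).filter
      (fun π => stair j ≤ π.parts)) = ∅ := by
  classical
  rw [Finset.filter_eq_empty_iff]
  intro π _
  intro hc
  have h1 : π.parts - stair j + stair j = π.parts := tsub_add_cancel_of_le hc
  have h2 := congrArg Multiset.sum h1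
  rw [Multiset.sum_add, stair_sum, π.parts_sum] at h2
  omega

lemma card_stair_filter {n j : ℕ} (hT : T j ≤ n) :
    ((Finset.univ : Finset (Nat.Partition n)).filter (fun π => stair j ≤ π.parts)).card
      = Fintype.card (Nat.Partition (n - T j)) := by
  classical
  rw [← Finset.card_univ]
  refine Finset.card_bij'
    (i := fun π hπ => ⟨π.parts - stair j,
        fun {x} hx => π.parts_pos (Multiset.mem_of_le (Multiset.sub_le_self _ _) hx),
        by
          have hle : stair j ≤ π.parts := (Finset.mem_filter.mp hπ).2
          have h1 : π.parts - stair j + stair j = π.parts := tsub_add_cancel_of_le hle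
          have h2 := congrArg Multiset.sum h1
          rw [Multiset.sum_add, stair_sum, π.parts_sum] at h2
          omega⟩)
    (j := fun μ _ => ⟨μ.parts + stair j,
        fun {x} hx => by
          rcases Multiset.mem_add.mp hx with h | h
          · exact μ.parts_pos h
          · have : 1 ≤ x ∧ x ≤ j := by simpa [stair, Finset.mem_Icc] using h
            omega,
        by
          rw [Multiset.sum_add, stair_sum, μ.parts_sum]
          omega⟩) ?_ ?_ ?_ ?_
  · intro π hπ
    exact Finset.mem_univ _
  · intro μ hμ
    rw [Finset.mem_filter]
    refine ⟨Finset.mem_univ _, ?_⟩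
    exact Multiset.le_add_left _ _
  · intro π hπ
    have hle : stair j ≤ π.parts := (Finset.mem_filter.mp hπ).2
    apply Nat.Partition.ext
    exact tsub_add_cancel_of_le hle
  · intro μ hμ
    apply Nat.Partition.ext
    exact add_tsub_cancel_right _ _

/-! ### Part 4: the TCD side -/

def TCDF (n : ℕ) : Finset (Finset (ℕ × Fin 2)) :=
  ((Finset.Icc 1 n ×ˢ (Finset.univ : Finset (Fin 2))).powerset).filter
    (fun s => ∑ p ∈ s, p.1 = n)

lemma D2_eq_TCDF (n : ℕ) : D2 n = (TCDF n).card := by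
  unfold D2
  have hset : {s : Finset (ℕ × Fin 2) | IsTCD n s} = ↑(TCDF n) := by
    ext s
    simp only [Set.mem_setOf_eq, TCDF, Finset.coe_filter, Finset.mem_powerset,
      Set.mem_setOf_eq, IsTCD]
    constructor
    · rintro ⟨hpos, hsum⟩
      refine ⟨?_, hsum⟩
      intro p hp
      rw [Finset.mem_product, Finset.mem_Icc]
      refine ⟨⟨hpos p hp, ?_⟩, Finset.mem_univ _⟩
      have h1 : p.1 ≤ ∑ q ∈ s, q.1 :=
        Finset.single_le_sum (fun q _ => Nat.zero_le q.1) hp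
      omega
    · rintro ⟨hsub, hsum⟩
      refine ⟨?_, hsum⟩
      intro p hp
      have := hsub hp
      rw [Finset.mem_product, Finset.mem_Icc] at this
      omega
  rw [hset, Set.ncard_coe_finset]

def PairsF (n : ℕ) : Finset (Finset ℕ × Finset ℕ) :=
  ((Finset.Icc 1 n).powerset ×ˢ (Finset.Icc 1 n).powerset).filter
    (fun AB => (∑ x ∈ AB.1, x) + (∑ x ∈ AB.2, x) = n)

lemma fin2_cases (c : Fin 2) : c = 0 ∨ c = 1 := by omega

lemma prodext {p q : ℕ × Fin 2} (h1 : p.1 = q.1) (h2 : p.2 = q.2) : p = q := by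
  cases p; cases q; simp_all

def toPair (s : Finset (ℕ × Fin 2)) : Finset ℕ × Finset ℕ :=
  ((s.filter (fun p => p.2 = 0)).image Prod.fst, (s.filter (fun p => p.2 = 1)).image Prod.fst)

def ofPair (AB : Finset ℕ × Finset ℕ) : Finset (ℕ × Fin 2) :=
  AB.1.image (fun a => (a, 0)) ∪ AB.2.image (fun b => (b, 1))

lemma filter_one_eq (s : Finset (ℕ × Fin 2)) :
    s.filter (fun p => p.2 = 1) = s.filter (fun p => ¬ p.2 = 0) := by
  ext p
  simp only [Finset.mem_filter]
  constructor
  · rintro ⟨h1, h2⟩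
    refine ⟨h1, ?_⟩
    rw [h2]
    decide
  · rintro ⟨h1, h2⟩
    rcases fin2_cases p.2 with h | h
    · exact absurd h h2
    · exact ⟨h1, h⟩

lemma image_fst_image (s : Finset (ℕ × Fin 2)) (c : Fin 2) :
    (((s.filter (fun p => p.2 = c)).image Prod.fst).image (fun a => (a, c)))
      = s.filter (fun p => p.2 = c) := by
  ext p
  simp only [Finset.mem_image, Finset.mem_filter]
  constructor
  · rintro ⟨a, ⟨q, hq, rfl⟩, rfl⟩
    have hqq : (q.1, c) = q := prodext rfl hq.2.symm
    rw [hqq]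
    exact hq
  · intro hp
    refine ⟨p.1, ⟨p, hp, rfl⟩, ?_⟩
    exact prodext rfl hp.2.symm

lemma sum_image_fst (s : Finset (ℕ × Fin 2)) (c : Fin 2) :
    ∑ x ∈ (s.filter (fun p => p.2 = c)).image Prod.fst, x
      = ∑ p ∈ s.filter (fun p => p.2 = c), p.1 := by
  apply Finset.sum_image
  intro p hp q hq hpq
  rw [Finset.mem_coe, Finset.mem_filter] at hp hq
  exact prodext hpq (hp.2.trans hq.2.symm)

lemma card_TCDF_PairsF (n : ℕ) : (TCDF n).card = (PairsF n).card := by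
  classical
  refine Finset.card_bij' (i := fun s _ => toPair s) (j := fun AB _ => ofPair AB) ?_ ?_ ?_ ?_
  · -- maps to
    intro s hs
    simp only [TCDF, Finset.mem_filter, Finset.mem_powerset] at hs
    obtain ⟨hsub, hsum⟩ := hs
    simp only [PairsF, Finset.mem_filter, Finset.mem_product, Finset.mem_powerset, toPair]
    have hin : ∀ c : Fin 2, (s.filter (fun p => p.2 = c)).image Prod.fst ⊆ Finset.Icc 1 n := by
      intro c x hx
      rw [Finset.mem_image] at hx
      obtain ⟨p, hp, rfl⟩ := hx
      have := hsub (Finset.mem_filter.mp hp).1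
      rw [Finset.mem_product] at this
      exact this.1
    refine ⟨⟨hin 0, hin 1⟩, ?_⟩
    rw [sum_image_fst, sum_image_fst, filter_one_eq,
      Finset.sum_filter_add_sum_filter_not s (fun p => p.2 = 0)]
    exact hsum
  · -- maps from
    intro AB hAB
    simp only [PairsF, Finset.mem_filter, Finset.mem_product, Finset.mem_powerset] at hAB
    obtain ⟨⟨hA, hB⟩, hsum⟩ := hAB
    simp only [TCDF, Finset.mem_filter, Finset.mem_powerset, ofPair]
    constructor
    · intro p hp
      rw [Finset.mem_union, Finset.mem_image, Finset.mem_image] at hp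
      rw [Finset.mem_product]
      rcases hp with ⟨a, ha, rfl⟩ | ⟨b, hb, rfl⟩
      · exact ⟨hA ha, Finset.mem_univ _⟩
      · exact ⟨hB hb, Finset.mem_univ _⟩
    · rw [Finset.sum_union]
      · rw [Finset.sum_image (by intro x _ y _ h; exact (congrArg Prod.fst h : x = y)),
            Finset.sum_image (by intro x _ y _ h; exact (congrArg Prod.fst h : x = y))]
        exact hsum
      · rw [Finset.disjoint_left]
        rintro p hp hq
        rw [Finset.mem_image] at hp hq
        obtain ⟨a, _, rfl⟩ := hp
        obtain ⟨b, _, hb⟩ := hq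
        have := congrArg Prod.snd hb
        simp at this
  · -- left inverse : ofPair (toPair s) = s
    intro s _
    show ofPair (toPair s) = s
    unfold ofPair toPair
    simp only
    rw [image_fst_image, image_fst_image, filter_one_eq,
      Finset.filter_union_filter_not_eq]
  · -- right inverse : toPair (ofPair AB) = AB
    intro AB hAB
    have h0 : (ofPair AB).filter (fun p => p.2 = 0) = AB.1.image (fun a => (a, 0)) := by
      ext p
      simp only [ofPair, Finset.mem_filter, Finset.mem_union, Finset.mem_image]
      constructor
      · rintro ⟨⟨a, ha, rfl⟩ | ⟨b, hb, rfl⟩, h2⟩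
        · exact ⟨a, ha, rfl⟩
        · simp at h2
      · rintro ⟨a, ha, rfl⟩
        exact ⟨Or.inl ⟨a, ha, rfl⟩, rfl⟩
    have h1 : (ofPair AB).filter (fun p => p.2 = 1) = AB.2.image (fun b => (b, 1)) := by
      ext p
      simp only [ofPair, Finset.mem_filter, Finset.mem_union, Finset.mem_image]
      constructor
      · rintro ⟨⟨a, ha, rfl⟩ | ⟨b, hb, rfl⟩, h2⟩
        · simp at h2
        · exact ⟨b, hb, rfl⟩
      · rintro ⟨b, hb, rfl⟩
        exact ⟨Or.inr ⟨b, hb, rfl⟩, rfl⟩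
    have himg : ∀ (C : Finset ℕ) (c : Fin 2), (C.image (fun a => (a, c))).image Prod.fst = C := by
      intro C c
      ext x
      simp only [Finset.mem_image]
      constructor
      · rintro ⟨p, ⟨a, ha, rfl⟩, rfl⟩; exact ha
      · intro hx; exact ⟨(x, c), ⟨x, hx, rfl⟩, rfl⟩
    show toPair (ofPair AB) = AB
    unfold toPair
    rw [h0, h1, himg, himg]


/-! ### Part 5a: Durfee machinery -/

def NN (n : ℕ) : ℕ := 4*n+4

lemma sum_Icc_split (f : ℕ → ℕ) (a K b : ℕ) (h1 : a ≤ K+1) (h2 : K ≤ b) :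
    ∑ v ∈ Finset.Icc a b, f v
      = ∑ v ∈ Finset.Icc a K, f v + ∑ v ∈ Finset.Icc (K+1) b, f v := by
  have hu : Finset.Icc a b = Finset.Icc a K ∪ Finset.Icc (K+1) b := by
    ext x; simp only [Finset.mem_union, Finset.mem_Icc]; omega
  have hd : Disjoint (Finset.Icc a K) (Finset.Icc (K+1) b) := by
    rw [Finset.disjoint_left]
    intro x hx hx'
    simp only [Finset.mem_Icc] at hx hx'
    omega
  rw [hu, Finset.sum_union hd]

lemma cnj_congr {N : ℕ} {f f' : ℕ → ℕ} (h : ∀ i, 1 ≤ i → i ≤ N → f i = f' i) (w : ℕ) :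
    cnj N f w = cnj N f' w := by
  unfold cnj
  apply Finset.card_nbij' (i := fun x => x) (j := fun x => x)
  · intro x hx
    simp only [Finset.mem_coe, Finset.mem_filter, Finset.mem_Icc] at hx ⊢
    rw [← h x hx.1.1 hx.1.2]
    exact hx
  · intro x hx
    simp only [Finset.mem_coe, Finset.mem_filter, Finset.mem_Icc] at hx ⊢
    rw [h x hx.1.1 hx.1.2]
    exact hx
  · intro x _; rfl
  · intro x _; rfl

lemma mkSet_congr {s : ℕ} {h h' : ℕ → ℕ} (he : ∀ i, 1 ≤ i → i ≤ s → h i = h' i) :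
    mkSet s h = mkSet s h' := by
  unfold mkSet
  apply Finset.image_congr
  intro i hi
  simp only [Finset.coe_Icc, Set.mem_Icc] at hi
  beta_reduce
  rw [he i hi.1 hi.2]

section Durfee

variable {n j : ℕ} {M : Multiset ℕ}

def bb (n j : ℕ) (M : Multiset ℕ) : ℕ :=
  ((Finset.Icc 1 (NN n)).filter (fun i => i ≤ cntf M (i + j + 1))).card

def FA (n j : ℕ) (M : Multiset ℕ) : Finset ℕ :=
  if cntf M (bb n j M + j + 1) ≤ bb n j M then
    mkSet (bb n j M + j) (fun v => cntf M v - bb n j M)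
  else
    mkSet (bb n j M) (fun i => srt (NN n) M i - (bb n j M + j + 1))

def FB (n j : ℕ) (M : Multiset ℕ) : Finset ℕ :=
  if cntf M (bb n j M + j + 1) ≤ bb n j M then
    mkSet (bb n j M) (fun i => srt (NN n) M i - (bb n j M + j + 1))
  else
    mkSet (bb n j M + j + 1) (fun v => cntf M v - bb n j M - 1)

variable (hj : T j ≤ n) (hpos : ∀ x ∈ M, 1 ≤ x) (hsum : M.sum = n - T j)

include hpos hsum in
lemma hMle : ∀ x ∈ M, x ≤ n := by
  intro x hx
  have h1 : x ≤ M.sum := Multiset.single_le_sum (fun y _ => Nat.zero_le y) _ hx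
  omega

include hpos hsum in
lemma hMcard : Multiset.card M ≤ n := by
  have := card_le_sum_of_pos hpos
  omega

include hj in
lemma hjn : j ≤ n := le_trans (le_T j) hj

include hj hpos hsum in
lemma bb_iff {i : ℕ} (hi : 1 ≤ i) : i ≤ bb n j M ↔ i ≤ cntf M (i + j + 1) := by
  have hTn : T j ≤ n := hj
  have hjT := le_T j
  have hdc : ∀ w ∈ (Finset.Icc 1 (NN n)).filter (fun i => i ≤ cntf M (i + j + 1)),
      ∀ w', 1 ≤ w' → w' ≤ w →
        w' ∈ (Finset.Icc 1 (NN n)).filter (fun i => i ≤ cntf M (i + j + 1)) := by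
    intro w hw w' h1 h2
    simp only [Finset.mem_filter, Finset.mem_Icc] at hw ⊢
    refine ⟨⟨h1, by omega⟩, ?_⟩
    have := cntf_anti M (w' + j + 1) (w + j + 1) (by omega) (by omega)
    omega
  have hmem := mem_dc_iff (Finset.filter_subset _ _) hdc i
  unfold bb
  constructor
  · intro h
    have := hmem.mpr ⟨hi, h⟩
    simp only [Finset.mem_filter, Finset.mem_Icc] at this
    exact this.2
  · intro h
    have hcard := hMcard hpos hsum
    have hle := cntf_le_card M (i + j + 1)
    have : i ∈ (Finset.Icc 1 (NN n)).filter (fun i => i ≤ cntf M (i + j + 1)) := by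
      simp only [Finset.mem_filter, Finset.mem_Icc]
      refine ⟨⟨hi, ?_⟩, h⟩
      unfold NN
      omega
    exact (hmem.mp this).2

include hj hpos hsum in
lemma bb_le_card : bb n j M ≤ Multiset.card M := by
  rcases Nat.eq_zero_or_pos (bb n j M) with h | h
  · omega
  · have := (bb_iff hj hpos hsum (i := bb n j M) h).mp le_rfl
    have := cntf_le_card M (bb n j M + j + 1)
    omega

include hj hpos hsum in
lemma bb_mu {i : ℕ} (hi : 1 ≤ i) (hib : i ≤ bb n j M) :
    i + j + 1 ≤ srt (NN n) M i := by
  have hTn : T j ≤ n := hj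
  have hjT := le_T j
  have h1 := (bb_iff hj hpos hsum hi).mp hib
  have hcard := hMcard hpos hsum
  have hle := cntf_le_card M (i + j + 1)
  have hjn' := hjn hj
  rw [srt_galois (N := NN n) M (by omega) (by unfold NN; omega)]
  exact h1

include hj hpos hsum in
lemma bb_mu' {i : ℕ} (hi : 1 ≤ i) (hib : i ≤ bb n j M) :
    bb n j M + j + 1 ≤ srt (NN n) M i := by
  have h1 := bb_mu hj hpos hsum (i := bb n j M) (by omega) le_rfl
  have h2 := srt_anti (NN n) M hib
  omega

include hj hpos hsum in
lemma bb_g {v : ℕ} (hv : 1 ≤ v) (hvb : v ≤ bb n j M + j + 1) :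
    bb n j M ≤ cntf M v := by
  have hTn : T j ≤ n := hj
  have hjT := le_T j
  rcases Nat.eq_zero_or_pos (bb n j M) with h | h
  · omega
  · have h1 := bb_mu' hj hpos hsum (i := bb n j M) h le_rfl
    have hcard := hMcard hpos hsum
    have hbc := bb_le_card hj hpos hsum
    have hjn' := hjn hj
    rw [← srt_galois (N := NN n) M hv (by unfold NN; omega)]
    omega

include hj hpos hsum in
lemma bb_gtop : cntf M (bb n j M + j + 2) ≤ bb n j M := by
  by_contra hc
  push_neg at hc
  have h1 := (bb_iff hj hpos hsum (i := bb n j M + 1) (by omega)).mpr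
  have harg : bb n j M + 1 + j + 1 = bb n j M + j + 2 := by omega
  rw [harg] at h1
  have := h1 (by omega)
  omega

include hj hpos hsum in
lemma bb_mu_top : srt (NN n) M (bb n j M + 1) ≤ bb n j M + j + 1 := by
  by_contra hc
  push_neg at hc
  have hTn : T j ≤ n := hj
  have hjT := le_T j
  have hcard := hMcard hpos hsum
  have hbc := bb_le_card hj hpos hsum
  have hjn' := hjn hj
  have h1 := (srt_galois (N := NN n) M (i := bb n j M + 1) (v := bb n j M + j + 2)
    (by omega) (by unfold NN; omega)).mp (by omega)
  have := bb_gtop hj hpos hsum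
  omega

include hj hpos hsum in
lemma beyond (v : ℕ) (hv : bb n j M + j + 2 ≤ v) :
    cntf M v = ((Finset.Icc 1 (bb n j M)).filter (fun i => v ≤ srt (NN n) M i)).card := by
  have hTn : T j ≤ n := hj
  have hjT := le_T j
  have hNN : NN n = 4*n+4 := rfl
  have hcard := hMcard hpos hsum
  have hbc := bb_le_card hj hpos hsum
  have hjn' := hjn hj
  have hMn := hMle hpos hsum
  rcases Nat.lt_or_ge (NN n) v with hbig | hsm
  · rw [cntf_zero hMn (by unfold NN at hbig; omega)]
    symm
    rw [Finset.card_eq_zero]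
    apply Finset.filter_false_of_mem
    intro i hi
    simp only [Finset.mem_Icc] at hi
    have := srt_le_bd (N := NN n) hMn hi.1
    omega
  · have h1 : cntf M v = cnj (NN n) (cnj (NN n) (cntf M)) v := by
      rw [cnj_cnj (cntf_anti M) (fun i hi => by
        have := cntf_le_card M i
        unfold NN
        omega) (by omega) hsm]
    rw [h1]
    have h2 : cnj (NN n) (cnj (NN n) (cntf M)) v
        = ((Finset.Icc 1 (NN n)).filter (fun i => v ≤ srt (NN n) M i)).card := rfl
    rw [h2]
    apply congrArg
    ext i
    simp only [Finset.mem_filter, Finset.mem_Icc]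
    constructor
    · rintro ⟨⟨hi1, _⟩, hi2⟩
      refine ⟨⟨hi1, ?_⟩, hi2⟩
      by_contra hcb
      push_neg at hcb
      have h3 := srt_anti (NN n) M (i := bb n j M + 1) (i' := i) (by omega)
      have h4 := bb_mu_top hj hpos hsum
      omega
    · rintro ⟨⟨hi1, hi2⟩, hi3⟩
      exact ⟨⟨hi1, by omega⟩, hi3⟩

include hj hpos hsum in
lemma sum_beyond :
    ∑ v ∈ Finset.Icc (bb n j M + j + 2) (NN n), cntf M v + bb n j M * (bb n j M + j + 1)
      = ∑ i ∈ Finset.Icc 1 (bb n j M), srt (NN n) M i := by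
  have hTn : T j ≤ n := hj
  have hjT := le_T j
  have hNN : NN n = 4*n+4 := rfl
  have hcard := hMcard hpos hsum
  have hbc := bb_le_card hj hpos hsum
  have hjn' := hjn hj
  have hMn := hMle hpos hsum
  have h1 : ∀ v ∈ Finset.Icc (bb n j M + j + 2) (NN n),
      cntf M v = ∑ i ∈ Finset.Icc 1 (bb n j M), if v ≤ srt (NN n) M i then 1 else 0 := by
    intro v hv
    simp only [Finset.mem_Icc] at hv
    rw [beyond hj hpos hsum v hv.1, Finset.card_filter]
  rw [Finset.sum_congr rfl h1, Finset.sum_comm]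
  have h2 : ∀ i ∈ Finset.Icc 1 (bb n j M),
      (∑ v ∈ Finset.Icc (bb n j M + j + 2) (NN n), if v ≤ srt (NN n) M i then 1 else 0)
        = srt (NN n) M i - (bb n j M + j + 1) := by
    intro i hi
    simp only [Finset.mem_Icc] at hi
    rw [← Finset.card_filter]
    have hle : srt (NN n) M i ≤ NN n := srt_le_bd (N := NN n)
      (fun x hx => le_trans (hMn x hx) (by unfold NN; omega)) hi.1
    have : (Finset.Icc (bb n j M + j + 2) (NN n)).filter (fun v => v ≤ srt (NN n) M i)
        = Finset.Icc (bb n j M + j + 2) (srt (NN n) M i) := by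
      ext x
      simp only [Finset.mem_filter, Finset.mem_Icc]
      omega
    rw [this, Nat.card_Icc]
    omega
  rw [Finset.sum_congr rfl h2]
  have h3 : ∀ i ∈ Finset.Icc 1 (bb n j M),
      srt (NN n) M i - (bb n j M + j + 1) + (bb n j M + j + 1) = srt (NN n) M i := by
    intro i hi
    simp only [Finset.mem_Icc] at hi
    have := bb_mu' hj hpos hsum hi.1 hi.2
    omega
  calc ∑ i ∈ Finset.Icc 1 (bb n j M), (srt (NN n) M i - (bb n j M + j + 1))
        + bb n j M * (bb n j M + j + 1)
      = ∑ i ∈ Finset.Icc 1 (bb n j M),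
          ((srt (NN n) M i - (bb n j M + j + 1)) + (bb n j M + j + 1)) := by
        rw [Finset.sum_add_distrib, Finset.sum_const, Nat.card_Icc]
        simp only [smul_eq_mul]
        have hc1 : bb n j M + 1 - 1 = bb n j M := by omega
        rw [hc1]
    _ = ∑ i ∈ Finset.Icc 1 (bb n j M), srt (NN n) M i := Finset.sum_congr rfl h3


include hpos hsum in
lemma hM_NN : ∀ x ∈ M, x ≤ NN n := by
  intro x hx
  have := hMle hpos hsum x hx
  unfold NN
  omega

lemma antiA1 : AntiOn (fun v => cntf M v - bb n j M) (bb n j M + j) := by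
  intro a b' h1 h2 _
  have := cntf_anti M a b' h1 h2
  beta_reduce
  omega

lemma antiRow : AntiOn (fun i => srt (NN n) M i - (bb n j M + j + 1)) (bb n j M) := by
  intro a b' h1 h2 _
  have := srt_anti (NN n) M h2
  beta_reduce
  omega

lemma antiB2 : AntiOn (fun v => cntf M v - bb n j M - 1) (bb n j M + j + 1) := by
  intro a b' h1 h2 _
  have := cntf_anti M a b' h1 h2
  beta_reduce
  omega

lemma sum_sub_const {s c : ℕ} {f : ℕ → ℕ} (h : ∀ v, 1 ≤ v → v ≤ s → c ≤ f v) :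
    (∑ v ∈ Finset.Icc 1 s, (f v - c)) + s * c = ∑ v ∈ Finset.Icc 1 s, f v := by
  have h2 : ∑ v ∈ Finset.Icc 1 s, ((f v - c) + c) = ∑ v ∈ Finset.Icc 1 s, f v := by
    apply Finset.sum_congr rfl
    intro v hv
    simp only [Finset.mem_Icc] at hv
    have := h v hv.1 hv.2
    omega
  rw [← h2, Finset.sum_add_distrib, Finset.sum_const, Nat.card_Icc]
  simp only [smul_eq_mul]
  have h3 : s + 1 - 1 = s := by omega
  rw [h3]

section Case1

variable (hc : cntf M (bb n j M + j + 1) ≤ bb n j M)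

include hc in
lemma FA1 : FA n j M = mkSet (bb n j M + j) (fun v => cntf M v - bb n j M) := by
  unfold FA; rw [if_pos hc]

include hc in
lemma FB1 : FB n j M = mkSet (bb n j M) (fun i => srt (NN n) M i - (bb n j M + j + 1)) := by
  unfold FB; rw [if_pos hc]

include hc in
lemma cardFA1 : (FA n j M).card = bb n j M + j := by
  rw [FA1 hc]; exact card_mkSet antiA1

include hc in
lemma cardFB1 : (FB n j M).card = bb n j M := by
  rw [FB1 hc]; exact card_mkSet antiRow

include hj hpos hsum hc in
lemma g_bc1 : cntf M (bb n j M + j + 1) = bb n j M := by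
  have := bb_g hj hpos hsum (v := bb n j M + j + 1) (by omega) le_rfl
  omega

include hj hpos hsum hc in
lemma le_FA1 : ∀ x ∈ FA n j M, x ≤ n := by
  intro x hx
  rw [FA1 hc] at hx
  have hbc := bb_le_card hj hpos hsum
  have h1 := mkSet_le antiA1 hx
  have h2 := cntf_le_card M 1
  have h3 := card_le_sum_of_pos hpos
  have h4 := le_T j
  have hTn : T j ≤ n := hj
  omega

include hj hpos hsum hc in
lemma le_FB1 : ∀ x ∈ FB n j M, x ≤ n := by
  intro x hx
  rw [FB1 hc] at hx
  have hbc := bb_le_card hj hpos hsum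
  have hcard := hMcard hpos hsum
  have h1 := mkSet_le antiRow hx
  have h2 : srt (NN n) M 1 ≤ n := srt_le_bd (hMle hpos hsum) le_rfl
  omega

include hj hpos hsum hc in
lemma sum_case1 : (∑ x ∈ FA n j M, x) + (∑ x ∈ FB n j M, x) = n := by
  have hTn : T j ≤ n := hj
  have hjT := le_T j
  have hNN : NN n = 4*n+4 := rfl
  have hcard := hMcard hpos hsum
  have hbc := bb_le_card hj hpos hsum
  have hjn' := hjn hj
  have eA : (∑ x ∈ FA n j M, x) + ((bb n j M) + j) * (bb n j M)
      = (∑ v ∈ Finset.Icc 1 ((bb n j M)+j), cntf M v) + T ((bb n j M)+j) := by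
    rw [FA1 hc, sum_mkSet antiA1]
    have := sum_sub_const (s := (bb n j M)+j) (c := (bb n j M)) (f := cntf M)
      (fun v h1 h2 => bb_g hj hpos hsum h1 (by omega))
    omega
  have eB : (∑ x ∈ FB n j M, x) + (bb n j M) * ((bb n j M)+j+1)
      = (∑ i ∈ Finset.Icc 1 (bb n j M), srt (NN n) M i) + T (bb n j M) := by
    rw [FB1 hc, sum_mkSet antiRow]
    have := sum_sub_const (s := (bb n j M)) (c := (bb n j M)+j+1) (f := srt (NN n) M)
      (fun i h1 h2 => bb_mu' hj hpos hsum h1 h2)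
    omega
  have eSplit : M.sum = (∑ v ∈ Finset.Icc 1 ((bb n j M)+j), cntf M v) + cntf M ((bb n j M)+j+1)
      + (∑ v ∈ Finset.Icc ((bb n j M)+j+2) (NN n), cntf M v) := by
    rw [← sum_cntf (N := NN n) M (hM_NN hpos hsum)]
    rw [sum_Icc_split _ 1 ((bb n j M)+j) (NN n) (by omega) (by omega)]
    rw [sum_Icc_split _ ((bb n j M)+j+1) ((bb n j M)+j+1) (NN n) (by omega) (by omega)]
    rw [Finset.Icc_self, Finset.sum_singleton,
      show (bb n j M) + j + 1 + 1 = (bb n j M) + j + 2 by omega]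
    omega
  have eBeyond := sum_beyond hj hpos hsum
  have egbc := g_bc1 hj hpos hsum hc
  have hID := ID1 (bb n j M) j
  have hc1 : ((bb n j M)+j) * (bb n j M) = (bb n j M) * ((bb n j M)+j) := Nat.mul_comm _ _
  have hc2 : (bb n j M) * ((bb n j M)+j+1) = (bb n j M) * ((bb n j M)+j) + (bb n j M) := by ring
  omega

end Case1

section Case2

variable (hc : ¬ cntf M (bb n j M + j + 1) ≤ bb n j M)

include hc in
lemma FA2 : FA n j M = mkSet (bb n j M) (fun i => srt (NN n) M i - (bb n j M + j + 1)) := by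
  unfold FA; rw [if_neg hc]

include hc in
lemma FB2 : FB n j M = mkSet (bb n j M + j + 1) (fun v => cntf M v - bb n j M - 1) := by
  unfold FB; rw [if_neg hc]

include hc in
lemma cardFA2 : (FA n j M).card = bb n j M := by
  rw [FA2 hc]; exact card_mkSet antiRow

include hc in
lemma cardFB2 : (FB n j M).card = bb n j M + j + 1 := by
  rw [FB2 hc]; exact card_mkSet antiB2

include hc in
lemma g_ge2 : ∀ v, 1 ≤ v → v ≤ bb n j M + j + 1 → bb n j M + 1 ≤ cntf M v := by
  intro v h1 h2
  have := cntf_anti M v (bb n j M + j + 1) h1 h2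
  omega

include hj hpos hsum hc in
lemma le_FA2 : ∀ x ∈ FA n j M, x ≤ n := by
  intro x hx
  rw [FA2 hc] at hx
  have hbc := bb_le_card hj hpos hsum
  have hcard := hMcard hpos hsum
  have h1 := mkSet_le antiRow hx
  have h2 : srt (NN n) M 1 ≤ n := srt_le_bd (hMle hpos hsum) le_rfl
  omega

include hj hpos hsum hc in
lemma le_FB2 : ∀ x ∈ FB n j M, x ≤ n := by
  intro x hx
  rw [FB2 hc] at hx
  have hbc := bb_le_card hj hpos hsum
  have h5 := cntf_anti M 1 (bb n j M + j + 1) le_rfl (by omega)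
  have h1 := mkSet_le antiB2 hx
  have h2 := cntf_le_card M 1
  have h3 := card_le_sum_of_pos hpos
  have h4 := le_T j
  have hTn : T j ≤ n := hj
  omega

include hj hpos hsum hc in
lemma sum_case2 : (∑ x ∈ FA n j M, x) + (∑ x ∈ FB n j M, x) = n := by
  have hTn : T j ≤ n := hj
  have hjT := le_T j
  have hNN : NN n = 4*n+4 := rfl
  have hcard := hMcard hpos hsum
  have hbc := bb_le_card hj hpos hsum
  have hjn' := hjn hj
  have eA : (∑ x ∈ FA n j M, x) + (bb n j M) * ((bb n j M)+j+1)
      = (∑ i ∈ Finset.Icc 1 (bb n j M), srt (NN n) M i) + T (bb n j M) := by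
    rw [FA2 hc, sum_mkSet antiRow]
    have := sum_sub_const (s := (bb n j M)) (c := (bb n j M)+j+1) (f := srt (NN n) M)
      (fun i h1 h2 => bb_mu' hj hpos hsum h1 h2)
    omega
  have eB : (∑ x ∈ FB n j M, x) + ((bb n j M)+j+1) * ((bb n j M)+1)
      = (∑ v ∈ Finset.Icc 1 ((bb n j M)+j+1), cntf M v) + T ((bb n j M)+j+1) := by
    rw [FB2 hc, sum_mkSet antiB2]
    have h5 : ∀ v ∈ Finset.Icc 1 ((bb n j M)+j+1), cntf M v - (bb n j M) - 1 = cntf M v - ((bb n j M)+1) := by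
      intro v hv; omega
    rw [Finset.sum_congr rfl h5]
    have := sum_sub_const (s := (bb n j M)+j+1) (c := (bb n j M)+1) (f := cntf M)
      (fun v h1 h2 => g_ge2 hc v h1 h2)
    omega
  have eSplit : M.sum = (∑ v ∈ Finset.Icc 1 ((bb n j M)+j+1), cntf M v)
      + (∑ v ∈ Finset.Icc ((bb n j M)+j+2) (NN n), cntf M v) := by
    rw [← sum_cntf (N := NN n) M (hM_NN hpos hsum)]
    rw [sum_Icc_split _ 1 ((bb n j M)+j+1) (NN n) (by omega) (by omega),
      show (bb n j M) + j + 1 + 1 = (bb n j M) + j + 2 by omega]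
  have eBeyond := sum_beyond hj hpos hsum
  have hID := ID2 (bb n j M) j
  have hc1 : ((bb n j M)+j+1) * ((bb n j M)+1) = ((bb n j M)+1) * ((bb n j M)+j+1) := Nat.mul_comm _ _
  omega

end Case2

end Durfee

/-! ### Part 5b: backward map -/

def abarF (N : ℕ) (A : Finset ℕ) : ℕ → ℕ :=
  fun i => if i ≤ A.card then srt N A.val i - (A.card + 1 - i) else 0

def Gg (n : ℕ) (A B : Finset ℕ) : ℕ → ℕ :=
  fun v =>
    if B.card ≤ A.card then
      (if v ≤ A.card + 1 then B.card + abarF (NN n) A v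
       else cnj (NN n) (abarF (NN n) B) (v - (A.card + 1)))
    else
      (if v ≤ B.card then A.card + 1 + abarF (NN n) B v
       else cnj (NN n) (abarF (NN n) A) (v - B.card))

def Gj (A B : Finset ℕ) : ℕ :=
  if B.card ≤ A.card then A.card - B.card else B.card - A.card - 1

def GM (n : ℕ) (A B : Finset ℕ) : Multiset ℕ := msof (NN n) (Gg n A B)

section Roundtrip1

variable {n j : ℕ} {M : Multiset ℕ}
variable (hj : T j ≤ n) (hpos : ∀ x ∈ M, 1 ≤ x) (hsum : M.sum = n - T j)

include hj hpos hsum in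
lemma cnj_rows {w : ℕ} (hw : 1 ≤ w) :
    cnj (NN n) (fun i => if i ≤ bb n j M then srt (NN n) M i - (bb n j M + j + 1) else 0) w
      = cntf M (w + (bb n j M + j + 1)) := by
  have hTn : T j ≤ n := hj
  have hjT := le_T j
  have hNN : NN n = 4*n+4 := rfl
  have hcard := hMcard hpos hsum
  have hbc := bb_le_card hj hpos hsum
  have hjn' := hjn hj
  rw [beyond hj hpos hsum (w + (bb n j M + j + 1)) (by omega)]
  unfold cnj
  apply congrArg
  ext i
  simp only [Finset.mem_filter, Finset.mem_Icc]
  constructor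
  · rintro ⟨⟨hi1, hi2⟩, hi3⟩
    by_cases hib : i ≤ bb n j M
    · rw [if_pos hib] at hi3
      exact ⟨⟨hi1, hib⟩, by omega⟩
    · rw [if_neg hib] at hi3
      omega
  · rintro ⟨⟨hi1, hi2⟩, hi3⟩
    refine ⟨⟨hi1, by omega⟩, ?_⟩
    rw [if_pos hi2]
    omega

include hj hpos hsum in
lemma GF1 (hc : cntf M (bb n j M + j + 1) ≤ bb n j M) :
    Gj (FA n j M) (FB n j M) = j ∧ GM n (FA n j M) (FB n j M) = M := by
  have hTn : T j ≤ n := hj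
  have hjT := le_T j
  have hNN : NN n = 4*n+4 := rfl
  have hcard := hMcard hpos hsum
  have hbc := bb_le_card hj hpos hsum
  have hjn' := hjn hj
  have hcA := cardFA1 (n := n) (j := j) (M := M) hc
  have hcB := cardFB1 (n := n) (j := j) (M := M) hc
  have hBA : (FB n j M).card ≤ (FA n j M).card := by omega
  constructor
  · unfold Gj
    rw [if_pos hBA, hcA, hcB]
    omega
  · -- GM = M
    have habarA : ∀ v, 1 ≤ v → abarF (NN n) (FA n j M) v
        = (if v ≤ (bb n j M) + j then cntf M v - (bb n j M) else 0) := by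
      intro v hv
      unfold abarF
      rw [hcA]
      by_cases hvs : v ≤ (bb n j M) + j
      · rw [if_pos hvs, if_pos hvs]
        have := ext_mkSet (N := NN n) (s := (bb n j M)+j) (h := fun v => cntf M v - (bb n j M))
          antiA1 (by
            beta_reduce
            have h2 := cntf_le_card M 1
            omega) hv hvs
        rw [FA1 hc]
        exact this
      · rw [if_neg hvs, if_neg hvs]
    have habarB : ∀ i, 1 ≤ i → abarF (NN n) (FB n j M) i
        = (if i ≤ (bb n j M) then srt (NN n) M i - ((bb n j M) + j + 1) else 0) := by
      intro i hi
      unfold abarF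
      rw [hcB]
      by_cases his : i ≤ (bb n j M)
      · rw [if_pos his, if_pos his]
        have := ext_mkSet (N := NN n) (s := (bb n j M)) (h := fun i => srt (NN n) M i - ((bb n j M)+j+1))
          antiRow (by
            beta_reduce
            have h2 : srt (NN n) M 1 ≤ n := srt_le_bd (hMle hpos hsum) le_rfl
            omega) hi his
        rw [FB1 hc]
        exact this
      · rw [if_neg his, if_neg his]
    have hGg : ∀ v, 1 ≤ v → Gg n (FA n j M) (FB n j M) v = cntf M v := by
      intro v hv
      unfold Gg
      rw [if_pos hBA, hcA, hcB]
      by_cases hvs : v ≤ (bb n j M) + j + 1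
      · rw [if_pos (by omega)]
        by_cases hvs' : v ≤ (bb n j M) + j
        · rw [habarA v hv, if_pos hvs']
          have := bb_g hj hpos hsum hv (by omega)
          omega
        · have hveq : v = (bb n j M) + j + 1 := by omega
          rw [habarA v hv, if_neg hvs', hveq]
          have := g_bc1 hj hpos hsum hc
          omega
      · rw [if_neg (by omega)]
        have hcnj : cnj (NN n) (abarF (NN n) (FB n j M)) (v - ((bb n j M) + j + 1))
            = cnj (NN n) (fun i => if i ≤ (bb n j M) then srt (NN n) M i - ((bb n j M) + j + 1) else 0)
                (v - ((bb n j M) + j + 1)) := by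
          apply cnj_congr
          intro i h1 _
          exact habarB i h1
        rw [hcnj, cnj_rows hj hpos hsum (by omega)]
        congr 1
        omega
    have hGanti : ∀ a b', 1 ≤ a → a ≤ b' → Gg n (FA n j M) (FB n j M) b'
        ≤ Gg n (FA n j M) (FB n j M) a := by
      intro a b' h1 h2
      rw [hGg a h1, hGg b' (by omega)]
      exact cntf_anti M a b' h1 h2
    have hGzero : ∀ v, NN n < v → Gg n (FA n j M) (FB n j M) v = 0 := by
      intro v hv
      rw [hGg v (by omega)]
      exact cntf_zero (hMle hpos hsum) (by omega)
    apply multiset_eq_of_cntf (fun x hx => (mem_msof hx).1) hpos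
    intro v hv
    rw [cntf_msof hGanti hGzero hv, hGg v hv]

include hj hpos hsum in
lemma GF2 (hc : ¬ cntf M (bb n j M + j + 1) ≤ bb n j M) :
    Gj (FA n j M) (FB n j M) = j ∧ GM n (FA n j M) (FB n j M) = M := by
  have hTn : T j ≤ n := hj
  have hjT := le_T j
  have hNN : NN n = 4*n+4 := rfl
  have hcard := hMcard hpos hsum
  have hbc := bb_le_card hj hpos hsum
  have hjn' := hjn hj
  have hcA := cardFA2 (n := n) (j := j) (M := M) hc
  have hcB := cardFB2 (n := n) (j := j) (M := M) hc
  have hBA : ¬ (FB n j M).card ≤ (FA n j M).card := by omega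
  constructor
  · unfold Gj
    rw [if_neg hBA, hcA, hcB]
    omega
  · have habarA : ∀ i, 1 ≤ i → abarF (NN n) (FA n j M) i
        = (if i ≤ (bb n j M) then srt (NN n) M i - ((bb n j M) + j + 1) else 0) := by
      intro i hi
      unfold abarF
      rw [hcA]
      by_cases his : i ≤ (bb n j M)
      · rw [if_pos his, if_pos his]
        have := ext_mkSet (N := NN n) (s := (bb n j M)) (h := fun i => srt (NN n) M i - ((bb n j M)+j+1))
          antiRow (by
            beta_reduce
            have h2 : srt (NN n) M 1 ≤ n := srt_le_bd (hMle hpos hsum) le_rfl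
            omega) hi his
        rw [FA2 hc]
        exact this
      · rw [if_neg his, if_neg his]
    have habarB : ∀ v, 1 ≤ v → abarF (NN n) (FB n j M) v
        = (if v ≤ (bb n j M) + j + 1 then cntf M v - (bb n j M) - 1 else 0) := by
      intro v hv
      unfold abarF
      rw [hcB]
      by_cases hvs : v ≤ (bb n j M) + j + 1
      · rw [if_pos hvs, if_pos hvs]
        have := ext_mkSet (N := NN n) (s := (bb n j M)+j+1) (h := fun v => cntf M v - (bb n j M) - 1)
          antiB2 (by
            beta_reduce
            have h2 := cntf_le_card M 1
            omega) hv hvs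
        rw [FB2 hc]
        exact this
      · rw [if_neg hvs, if_neg hvs]
    have hGg : ∀ v, 1 ≤ v → Gg n (FA n j M) (FB n j M) v = cntf M v := by
      intro v hv
      unfold Gg
      rw [if_neg hBA, hcA, hcB]
      by_cases hvs : v ≤ (bb n j M) + j + 1
      · rw [if_pos hvs, habarB v hv, if_pos hvs]
        have := g_ge2 hc v hv hvs
        omega
      · rw [if_neg hvs]
        have hcnj : cnj (NN n) (abarF (NN n) (FA n j M)) (v - ((bb n j M) + j + 1))
            = cnj (NN n) (fun i => if i ≤ (bb n j M) then srt (NN n) M i - ((bb n j M) + j + 1) else 0)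
                (v - ((bb n j M) + j + 1)) := by
          apply cnj_congr
          intro i h1 _
          exact habarA i h1
        rw [hcnj, cnj_rows hj hpos hsum (by omega)]
        congr 1
        omega
    have hGanti : ∀ a b', 1 ≤ a → a ≤ b' → Gg n (FA n j M) (FB n j M) b'
        ≤ Gg n (FA n j M) (FB n j M) a := by
      intro a b' h1 h2
      rw [hGg a h1, hGg b' (by omega)]
      exact cntf_anti M a b' h1 h2
    have hGzero : ∀ v, NN n < v → Gg n (FA n j M) (FB n j M) v = 0 := by
      intro v hv
      rw [hGg v (by omega)]
      exact cntf_zero (hMle hpos hsum) (by omega)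
    apply multiset_eq_of_cntf (fun x hx => (mem_msof hx).1) hpos
    intro v hv
    rw [cntf_msof hGanti hGzero hv, hGg v hv]

end Roundtrip1

/-! ### Part 5c: backward roundtrip -/

lemma sum_shift (f : ℕ → ℕ) (K L : ℕ) :
    ∑ v ∈ Finset.Icc (K+1) L, f (v - K) = ∑ w ∈ Finset.Icc 1 (L - K), f w := by
  apply Finset.sum_nbij' (i := fun v => v - K) (j := fun w => w + K)
  · intro a ha; simp only [Finset.mem_Icc] at ha ⊢; omega
  · intro a ha; simp only [Finset.mem_Icc] at ha ⊢; omega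
  · intro a ha; simp only [Finset.mem_Icc] at ha; omega
  · intro a ha; simp only [Finset.mem_Icc] at ha; omega
  · intro a _; rfl

lemma card_filter_shift (p : ℕ → Prop) [DecidablePred p] (K L : ℕ) :
    ((Finset.Icc (K+1) L).filter (fun v => p (v - K))).card
      = ((Finset.Icc 1 (L - K)).filter (fun w => p w)).card := by
  apply Finset.card_nbij' (i := fun v => v - K) (j := fun w => w + K)
  · intro a ha
    simp only [Finset.mem_coe, Finset.mem_filter, Finset.mem_Icc] at ha ⊢
    refine ⟨by omega, ha.2⟩
  · intro a ha
    simp only [Finset.mem_coe, Finset.mem_filter, Finset.mem_Icc] at ha ⊢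
    refine ⟨by omega, ?_⟩
    rw [show a + K - K = a by omega]
    exact ha.2
  · intro a ha; simp only [Finset.mem_coe, Finset.mem_filter, Finset.mem_Icc] at ha; dsimp only; omega
  · intro a ha; simp only [Finset.mem_coe, Finset.mem_filter, Finset.mem_Icc] at ha; dsimp only; omega

lemma cnj_split {N K : ℕ} (g : ℕ → ℕ) (hK : K ≤ N) (i : ℕ) :
    cnj N g i = ((Finset.Icc 1 K).filter (fun v => i ≤ g v)).card
      + ((Finset.Icc (K+1) N).filter (fun v => i ≤ g v)).card := by
  unfold cnj
  have hu : Finset.Icc 1 N = Finset.Icc 1 K ∪ Finset.Icc (K+1) N := by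
    ext x; simp only [Finset.mem_union, Finset.mem_Icc]; omega
  have hd : Disjoint ((Finset.Icc 1 K).filter (fun v => i ≤ g v))
      ((Finset.Icc (K+1) N).filter (fun v => i ≤ g v)) := by
    rw [Finset.disjoint_left]
    intro x hx hx'
    simp only [Finset.mem_filter, Finset.mem_Icc] at hx hx'
    omega
  rw [hu, Finset.filter_union, Finset.card_union_of_disjoint hd]

section Back

variable {n : ℕ} {C : Finset ℕ}
variable (hCpos : ∀ x ∈ C, 1 ≤ x) (hCle : ∀ x ∈ C, x ≤ n)

include hCpos hCle in
lemma hFcard : C.card ≤ n := by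
  have := Finset.card_le_card (Finset.subset_iff.mpr
    (fun x hx => Finset.mem_Icc.mpr ⟨hCpos x hx, hCle x hx⟩))
  rw [Nat.card_Icc] at this
  omega

include hCpos hCle in
lemma abar_anti : ∀ a b', 1 ≤ a → a ≤ b' →
    abarF (NN n) C b' ≤ abarF (NN n) C a := by
  intro a b' h1 h2
  have hNN : NN n = 4*n+4 := rfl
  have hcard := hFcard hCpos hCle
  have hAv : Multiset.card C.val = C.card := rfl
  unfold abarF
  by_cases hb : b' ≤ C.card
  · rw [if_pos hb, if_pos (by omega)]
    have hg := srt_gap (N := NN n) C.nodup hCpos hCle (by omega) h1 h2 hb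
    have hs := srt_stair (N := NN n) hCpos (by omega : 1 ≤ b') hb (by omega)
    omega
  · rw [if_neg hb]
    omega

include hCpos hCle in
lemma abar_le : ∀ i, 1 ≤ i → abarF (NN n) C i ≤ n := by
  intro i hi
  unfold abarF
  by_cases hb : i ≤ C.card
  · rw [if_pos hb]
    have := srt_le_bd (N := NN n) (M := C.val) hCle hi
    omega
  · rw [if_neg hb]; omega

lemma abar_zero {N : ℕ} {i : ℕ} (h : C.card < i) : abarF N C i = 0 := by
  unfold abarF; rw [if_neg (by omega)]

include hCpos hCle in
lemma mkSet_abar : mkSet C.card (abarF (NN n) C) = C := by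
  have hNN : NN n = 4*n+4 := rfl
  have hcard := hFcard hCpos hCle
  have h1 : mkSet C.card (abarF (NN n) C)
      = mkSet C.card (fun i => srt (NN n) C.val i - (C.card + 1 - i)) := by
    apply mkSet_congr
    intro i h1 h2
    unfold abarF
    rw [if_pos h2]
  rw [h1]
  exact mkSet_ext hCpos hCle (by omega)

include hCpos hCle in
lemma sum_abar : (∑ i ∈ Finset.Icc 1 C.card, abarF (NN n) C i) + T C.card
    = ∑ x ∈ C, x := by
  conv_rhs => rw [← mkSet_abar hCpos hCle]
  rw [sum_mkSet (fun a b h1 h2 h3 => abar_anti hCpos hCle a b h1 h2)]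

include hCpos hCle in
lemma cnj_abar_le : ∀ w, 1 ≤ w → cnj (NN n) (abarF (NN n) C) w ≤ C.card := by
  intro w hw
  exact cnj_le_bd (fun i hi => abar_zero hi) hw

include hCpos hCle in
lemma cnj_abar_zero : ∀ w, n < w → cnj (NN n) (abarF (NN n) C) w = 0 := by
  intro w hw
  exact cnj_eq_zero (abar_le hCpos hCle) hw

include hCpos hCle in
lemma cnj_cnj_abar : ∀ i, 1 ≤ i → i ≤ NN n →
    cnj (NN n) (cnj (NN n) (abarF (NN n) C)) i = abarF (NN n) C i := by
  intro i h1 h2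
  apply cnj_cnj (abar_anti hCpos hCle) (fun w hw => by
    have := abar_le hCpos hCle w hw
    have hNN : NN n = 4*n+4 := rfl
    omega) h1 h2

include hCpos hCle in
lemma sum_cnj_abar (K : ℕ) (hK : K ≤ n + 1) :
    (∑ v ∈ Finset.Icc (K+1) (NN n), cnj (NN n) (abarF (NN n) C) (v - K)) + T C.card
      = ∑ x ∈ C, x := by
  have hNN : NN n = 4*n+4 := rfl
  have hcard := hFcard hCpos hCle
  rw [sum_shift]
  have h1 : ∑ w ∈ Finset.Icc 1 (NN n - K), cnj (NN n) (abarF (NN n) C) w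
      = ∑ w ∈ Finset.Icc 1 (NN n), cnj (NN n) (abarF (NN n) C) w := by
    rw [sum_Icc_split (fun w => cnj (NN n) (abarF (NN n) C) w) 1 (NN n - K) (NN n)
      (by omega) (by omega)]
    have h2 : ∑ w ∈ Finset.Icc (NN n - K + 1) (NN n), cnj (NN n) (abarF (NN n) C) w = 0 := by
      apply Finset.sum_eq_zero
      intro w hw
      simp only [Finset.mem_Icc] at hw
      exact cnj_abar_zero hCpos hCle w (by omega)
    omega
  rw [h1, sum_cnj _ (fun i h1 h2 => by
    have := abar_le hCpos hCle i h1
    omega)]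
  have h3 : ∑ i ∈ Finset.Icc 1 (NN n), abarF (NN n) C i
      = ∑ i ∈ Finset.Icc 1 C.card, abarF (NN n) C i := by
    rw [sum_Icc_split (fun i => abarF (NN n) C i) 1 C.card (NN n) (by omega) (by omega)]
    have h4 : ∑ i ∈ Finset.Icc (C.card + 1) (NN n), abarF (NN n) C i = 0 := by
      apply Finset.sum_eq_zero
      intro w hw
      simp only [Finset.mem_Icc] at hw
      exact abar_zero (by omega)
    omega
  rw [h3]
  exact sum_abar hCpos hCle

include hCpos hCle in
lemma cnj_glue {K i : ℕ} {G : ℕ → ℕ}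
    (hi : 1 ≤ i) (hiN : i ≤ NN n) (hKn : K ≤ n + 1)
    (hlow : ∀ v, 1 ≤ v → v ≤ K → i ≤ G v)
    (hhigh : ∀ v, K < v → G v = cnj (NN n) (abarF (NN n) C) (v - K)) :
    cnj (NN n) G i = K + abarF (NN n) C i := by
  have hNN : NN n = 4*n+4 := rfl
  have hcard := hFcard hCpos hCle
  rw [cnj_split G (show K ≤ NN n by omega) i]
  have h1 : (Finset.Icc 1 K).filter (fun v => i ≤ G v) = Finset.Icc 1 K := by
    apply Finset.filter_true_of_mem
    intro v hv
    simp only [Finset.mem_Icc] at hv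
    exact hlow v hv.1 hv.2
  have h2 : ((Finset.Icc (K+1) (NN n)).filter (fun v => i ≤ G v)).card
      = ((Finset.Icc (K+1) (NN n)).filter
          (fun v => i ≤ cnj (NN n) (abarF (NN n) C) (v - K))).card := by
    congr 1
    apply Finset.filter_congr
    intro v hv
    simp only [Finset.mem_Icc] at hv
    rw [hhigh v (by omega)]
  rw [h1, h2, Nat.card_Icc,
    card_filter_shift (fun w => i ≤ cnj (NN n) (abarF (NN n) C) w) K (NN n)]
  have h3 : ((Finset.Icc 1 (NN n - K)).filter
        (fun w => i ≤ cnj (NN n) (abarF (NN n) C) w)).card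
      = ((Finset.Icc 1 (NN n)).filter
        (fun w => i ≤ cnj (NN n) (abarF (NN n) C) w)).card := by
    congr 1
    ext w
    simp only [Finset.mem_filter, Finset.mem_Icc]
    constructor
    · rintro ⟨⟨hw1, _⟩, hw2⟩
      exact ⟨⟨hw1, by omega⟩, hw2⟩
    · rintro ⟨⟨hw1, hw2⟩, hw3⟩
      refine ⟨⟨hw1, ?_⟩, hw3⟩
      by_contra hcw
      push_neg at hcw
      have := cnj_abar_zero hCpos hCle w (by omega)
      omega
  rw [h3]
  have h4 : ((Finset.Icc 1 (NN n)).filter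
        (fun w => i ≤ cnj (NN n) (abarF (NN n) C) w)).card
      = cnj (NN n) (cnj (NN n) (abarF (NN n) C)) i := rfl
  rw [h4, cnj_cnj_abar hCpos hCle i hi hiN]
  omega

end Back

section Roundtrip2

variable {n : ℕ} {A B : Finset ℕ}
variable (hApos : ∀ x ∈ A, 1 ≤ x) (hAle : ∀ x ∈ A, x ≤ n)
variable (hBpos : ∀ x ∈ B, 1 ≤ x) (hBle : ∀ x ∈ B, x ≤ n)
variable (hsumAB : (∑ x ∈ A, x) + (∑ x ∈ B, x) = n)

include hApos hAle hBpos hBle hsumAB in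
lemma FG1 (hst : B.card ≤ A.card) :
    T (Gj A B) ≤ n ∧ (∀ x ∈ GM n A B, 1 ≤ x) ∧ (GM n A B).sum = n - T (Gj A B)
    ∧ FA n (Gj A B) (GM n A B) = A ∧ FB n (Gj A B) (GM n A B) = B := by
  have hNN : NN n = 4*n+4 := rfl
  have hcA := hFcard hApos hAle
  have hcB := hFcard hBpos hBle
  have hGj : Gj A B = A.card - B.card := by unfold Gj; rw [if_pos hst]
  have hGg : ∀ v, Gg n A B v = if v ≤ A.card + 1 then B.card + abarF (NN n) A v
      else cnj (NN n) (abarF (NN n) B) (v - (A.card + 1)) := by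
    intro v; unfold Gg; rw [if_pos hst]
  have hsA := sum_abar hApos hAle
  have hsB := sum_abar hBpos hBle
  -- antitone
  have hganti : ∀ a b', 1 ≤ a → a ≤ b' → Gg n A B b' ≤ Gg n A B a := by
    intro a b' h1 h2
    rw [hGg a, hGg b']
    by_cases hb' : b' ≤ A.card + 1
    · rw [if_pos hb', if_pos (by omega)]
      have := abar_anti hApos hAle a b' h1 h2
      omega
    · rw [if_neg hb']
      have h3 := cnj_abar_le hBpos hBle (b' - (A.card + 1)) (by omega)
      by_cases ha : a ≤ A.card + 1
      · rw [if_pos ha]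
        omega
      · rw [if_neg ha]
        exact cnj_anti _ _ (by omega)
  have hgzero : ∀ v, NN n < v → Gg n A B v = 0 := by
    intro v hv
    rw [hGg v, if_neg (by omega)]
    exact cnj_abar_zero hBpos hBle _ (by omega)
  -- T bound
  have hTs : T (A.card) ≤ ∑ x ∈ A, x := by omega
  have hTj : T (Gj A B) ≤ n := by
    rw [hGj]
    have := T_mono (show A.card - B.card ≤ A.card by omega)
    omega
  -- sum
  have hsumG : (∑ v ∈ Finset.Icc 1 (NN n), Gg n A B v) + T (Gj A B) = n := by
    rw [sum_Icc_split (Gg n A B) 1 (A.card + 1) (NN n) (by omega) (by omega)]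
    have e1 : ∑ v ∈ Finset.Icc 1 (A.card + 1), Gg n A B v
        = (A.card + 1) * B.card + ∑ v ∈ Finset.Icc 1 A.card, abarF (NN n) A v := by
      have h4 : ∀ v ∈ Finset.Icc 1 (A.card + 1), Gg n A B v
          = B.card + abarF (NN n) A v := by
        intro v hv
        simp only [Finset.mem_Icc] at hv
        rw [hGg v, if_pos hv.2]
      rw [Finset.sum_congr rfl h4, Finset.sum_add_distrib, Finset.sum_const, Nat.card_Icc]
      simp only [smul_eq_mul]
      have h5 : ∑ v ∈ Finset.Icc 1 (A.card + 1), abarF (NN n) A v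
          = ∑ v ∈ Finset.Icc 1 A.card, abarF (NN n) A v := by
        rw [sum_Icc_split (abarF (NN n) A) 1 A.card (A.card + 1) (by omega) (by omega),
          Finset.Icc_self, Finset.sum_singleton, abar_zero (by omega)]
        omega
      rw [h5]
      have h6 : A.card + 1 + 1 - 1 = A.card + 1 := by omega
      rw [h6]
    have e2 : (∑ v ∈ Finset.Icc (A.card + 1 + 1) (NN n), Gg n A B v) + T B.card
        = ∑ x ∈ B, x := by
      have h4 : ∀ v ∈ Finset.Icc (A.card + 1 + 1) (NN n), Gg n A B v
          = cnj (NN n) (abarF (NN n) B) (v - (A.card + 1)) := by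
        intro v hv
        simp only [Finset.mem_Icc] at hv
        rw [hGg v, if_neg (by omega)]
      rw [Finset.sum_congr rfl h4]
      exact sum_cnj_abar hBpos hBle (A.card + 1) (by omega)
    have hID := ID1 B.card (A.card - B.card)
    rw [show B.card + (A.card - B.card) = A.card by omega] at hID
    have hcomm : (A.card + 1) * B.card = B.card * (A.card + 1) := Nat.mul_comm _ _
    rw [hGj]
    omega
  have hGMpos : ∀ x ∈ GM n A B, 1 ≤ x := fun x hx => (mem_msof hx).1
  have hGMsum : (GM n A B).sum = n - T (Gj A B) := by
    unfold GM
    rw [sum_msof hganti hgzero]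
    omega
  have hcntf : ∀ v, 1 ≤ v → cntf (GM n A B) v = Gg n A B v := by
    intro v hv
    exact cntf_msof hganti hgzero hv
  -- bb = B.card
  have harith1 : B.card + (Gj A B) + 1 = A.card + 1 := by rw [hGj]; omega
  have hGgtop : Gg n A B (A.card + 1) = B.card := by
    rw [hGg, if_pos (by omega), abar_zero (by omega)]
    omega
  have hbb : bb n (Gj A B) (GM n A B) = B.card := by
    apply le_antisymm
    · by_contra hcb
      push_neg at hcb
      have h7 := (bb_iff hTj hGMpos hGMsum (i := B.card + 1) (by omega)).mp hcb
      rw [hcntf _ (by omega)] at h7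
      rw [show B.card + 1 + Gj A B + 1 = A.card + 1 + 1 by omega] at h7
      rw [hGg, if_neg (by omega)] at h7
      rw [show A.card + 1 + 1 - (A.card + 1) = 1 by omega] at h7
      have := cnj_abar_le hBpos hBle 1 le_rfl
      omega
    · rcases Nat.eq_zero_or_pos B.card with h0 | h0
      · omega
      · have h7 := (bb_iff hTj hGMpos hGMsum (i := B.card) h0).mpr
        apply h7
        rw [hcntf _ (by omega), harith1, hGgtop]
  have hcase : cntf (GM n A B) (bb n (Gj A B) (GM n A B) + Gj A B + 1)
      ≤ bb n (Gj A B) (GM n A B) := by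
    rw [hbb, harith1, hcntf _ (by omega), hGgtop]
  refine ⟨hTj, hGMpos, hGMsum, ?_, ?_⟩
  · -- FA = A
    rw [FA1 hcase, hbb]
    rw [show B.card + Gj A B = A.card by omega]
    have hcg : mkSet A.card (fun v => cntf (GM n A B) v - B.card)
        = mkSet A.card (abarF (NN n) A) := by
      apply mkSet_congr
      intro i h1 h2
      rw [hcntf _ h1, hGg, if_pos (by omega)]
      omega
    rw [hcg]
    exact mkSet_abar hApos hAle
  · -- FB = B
    rw [FB1 hcase, hbb]
    have hsrt : ∀ i, 1 ≤ i → i ≤ B.card →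
        srt (NN n) (GM n A B) i = (A.card + 1) + abarF (NN n) B i := by
      intro i h1 h2
      have hc1 : srt (NN n) (GM n A B) i = cnj (NN n) (Gg n A B) i := by
        unfold srt
        exact cnj_congr (fun v hv _ => hcntf v hv) i
      rw [hc1]
      apply cnj_glue hBpos hBle h1 (by omega) (by omega)
      · intro v hv1 hv2
        rw [hGg, if_pos hv2]
        omega
      · intro v hv
        rw [hGg, if_neg (by omega)]
    have hcg : mkSet B.card (fun i => srt (NN n) (GM n A B) i - (B.card + Gj A B + 1))
        = mkSet B.card (abarF (NN n) B) := by
      apply mkSet_congr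
      intro i h1 h2
      rw [hsrt i h1 h2, harith1]
      omega
    rw [hcg]
    exact mkSet_abar hBpos hBle

include hApos hAle hBpos hBle hsumAB in
lemma FG2 (hst : ¬ B.card ≤ A.card) :
    T (Gj A B) ≤ n ∧ (∀ x ∈ GM n A B, 1 ≤ x) ∧ (GM n A B).sum = n - T (Gj A B)
    ∧ FA n (Gj A B) (GM n A B) = A ∧ FB n (Gj A B) (GM n A B) = B := by
  have hNN : NN n = 4*n+4 := rfl
  have hcA := hFcard hApos hAle
  have hcB := hFcard hBpos hBle
  have hGj : Gj A B = B.card - A.card - 1 := by unfold Gj; rw [if_neg hst]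
  have hGg : ∀ v, Gg n A B v = if v ≤ B.card then A.card + 1 + abarF (NN n) B v
      else cnj (NN n) (abarF (NN n) A) (v - B.card) := by
    intro v; unfold Gg; rw [if_neg hst]
  have hsA := sum_abar hApos hAle
  have hsB := sum_abar hBpos hBle
  have hganti : ∀ a b', 1 ≤ a → a ≤ b' → Gg n A B b' ≤ Gg n A B a := by
    intro a b' h1 h2
    rw [hGg a, hGg b']
    by_cases hb' : b' ≤ B.card
    · rw [if_pos hb', if_pos (by omega)]
      have := abar_anti hBpos hBle a b' h1 h2
      omega
    · rw [if_neg hb']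
      have h3 := cnj_abar_le hApos hAle (b' - B.card) (by omega)
      by_cases ha : a ≤ B.card
      · rw [if_pos ha]
        omega
      · rw [if_neg ha]
        exact cnj_anti _ _ (by omega)
  have hgzero : ∀ v, NN n < v → Gg n A B v = 0 := by
    intro v hv
    rw [hGg v, if_neg (by omega)]
    exact cnj_abar_zero hApos hAle _ (by omega)
  have hTt : T (B.card) ≤ ∑ x ∈ B, x := by omega
  have hTj : T (Gj A B) ≤ n := by
    rw [hGj]
    have := T_mono (show B.card - A.card - 1 ≤ B.card by omega)
    omega
  have hsumG : (∑ v ∈ Finset.Icc 1 (NN n), Gg n A B v) + T (Gj A B) = n := by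
    rw [sum_Icc_split (Gg n A B) 1 B.card (NN n) (by omega) (by omega)]
    have e1 : ∑ v ∈ Finset.Icc 1 B.card, Gg n A B v
        = B.card * (A.card + 1) + ∑ v ∈ Finset.Icc 1 B.card, abarF (NN n) B v := by
      have h4 : ∀ v ∈ Finset.Icc 1 B.card, Gg n A B v
          = A.card + 1 + abarF (NN n) B v := by
        intro v hv
        simp only [Finset.mem_Icc] at hv
        rw [hGg v, if_pos hv.2]
      rw [Finset.sum_congr rfl h4, Finset.sum_add_distrib, Finset.sum_const, Nat.card_Icc]
      simp only [smul_eq_mul]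
      have h6 : B.card + 1 - 1 = B.card := by omega
      rw [h6]
    have e2 : (∑ v ∈ Finset.Icc (B.card + 1) (NN n), Gg n A B v) + T A.card
        = ∑ x ∈ A, x := by
      have h4 : ∀ v ∈ Finset.Icc (B.card + 1) (NN n), Gg n A B v
          = cnj (NN n) (abarF (NN n) A) (v - B.card) := by
        intro v hv
        simp only [Finset.mem_Icc] at hv
        rw [hGg v, if_neg (by omega)]
      rw [Finset.sum_congr rfl h4]
      exact sum_cnj_abar hApos hAle B.card (by omega)
    have hID := ID2 A.card (B.card - A.card - 1)
    rw [show A.card + (B.card - A.card - 1) + 1 = B.card by omega] at hID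
    have hcomm : B.card * (A.card + 1) = (A.card + 1) * B.card := Nat.mul_comm _ _
    rw [hGj]
    omega
  have hGMpos : ∀ x ∈ GM n A B, 1 ≤ x := fun x hx => (mem_msof hx).1
  have hGMsum : (GM n A B).sum = n - T (Gj A B) := by
    unfold GM
    rw [sum_msof hganti hgzero]
    omega
  have hcntf : ∀ v, 1 ≤ v → cntf (GM n A B) v = Gg n A B v := by
    intro v hv
    exact cntf_msof hganti hgzero hv
  have harith1 : A.card + (Gj A B) + 1 = B.card := by rw [hGj]; omega
  have hbb : bb n (Gj A B) (GM n A B) = A.card := by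
    apply le_antisymm
    · by_contra hcb
      push_neg at hcb
      have h7 := (bb_iff hTj hGMpos hGMsum (i := A.card + 1) (by omega)).mp hcb
      rw [hcntf _ (by omega)] at h7
      rw [show A.card + 1 + Gj A B + 1 = B.card + 1 by omega] at h7
      rw [hGg, if_neg (by omega)] at h7
      rw [show B.card + 1 - B.card = 1 by omega] at h7
      have := cnj_abar_le hApos hAle 1 le_rfl
      omega
    · rcases Nat.eq_zero_or_pos A.card with h0 | h0
      · omega
      · have h7 := (bb_iff hTj hGMpos hGMsum (i := A.card) h0).mpr
        apply h7
        rw [hcntf _ (by omega), harith1, hGg, if_pos le_rfl]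
        omega
  have hcase : ¬ (cntf (GM n A B) (bb n (Gj A B) (GM n A B) + Gj A B + 1)
      ≤ bb n (Gj A B) (GM n A B)) := by
    rw [hbb, harith1, hcntf _ (by omega), hGg, if_pos le_rfl]
    omega
  refine ⟨hTj, hGMpos, hGMsum, ?_, ?_⟩
  · -- FA = A
    rw [FA2 hcase, hbb]
    have hsrt : ∀ i, 1 ≤ i → i ≤ A.card →
        srt (NN n) (GM n A B) i = B.card + abarF (NN n) A i := by
      intro i h1 h2
      have hc1 : srt (NN n) (GM n A B) i = cnj (NN n) (Gg n A B) i := by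
        unfold srt
        exact cnj_congr (fun v hv _ => hcntf v hv) i
      rw [hc1]
      apply cnj_glue hApos hAle h1 (by omega) (by omega)
      · intro v hv1 hv2
        rw [hGg, if_pos hv2]
        omega
      · intro v hv
        rw [hGg, if_neg (by omega)]
    have hcg : mkSet A.card (fun i => srt (NN n) (GM n A B) i - (A.card + Gj A B + 1))
        = mkSet A.card (abarF (NN n) A) := by
      apply mkSet_congr
      intro i h1 h2
      rw [hsrt i h1 h2, harith1]
      omega
    rw [hcg]
    exact mkSet_abar hApos hAle
  · -- FB = B
    rw [FB2 hcase, hbb]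
    rw [show A.card + Gj A B + 1 = B.card by omega]
    have hcg : mkSet B.card (fun v => cntf (GM n A B) v - A.card - 1)
        = mkSet B.card (abarF (NN n) B) := by
      apply mkSet_congr
      intro i h1 h2
      rw [hcntf _ h1, hGg, if_pos h2]
      omega
    rw [hcg]
    exact mkSet_abar hBpos hBle

end Roundtrip2

/-! ### Part 5d: assembly -/

lemma mem_PairsF {n : ℕ} {y : Finset ℕ × Finset ℕ} (hy : y ∈ PairsF n) :
    (∀ x ∈ y.1, 1 ≤ x) ∧ (∀ x ∈ y.1, x ≤ n) ∧ (∀ x ∈ y.2, 1 ≤ x) ∧ (∀ x ∈ y.2, x ≤ n)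
      ∧ ((∑ x ∈ y.1, x) + (∑ x ∈ y.2, x) = n) := by
  simp only [PairsF, Finset.mem_filter, Finset.mem_product, Finset.mem_powerset] at hy
  obtain ⟨⟨h1, h2⟩, h3⟩ := hy
  refine ⟨?_, ?_, ?_, ?_, h3⟩
  · intro x hx; exact (Finset.mem_Icc.mp (h1 hx)).1
  · intro x hx; exact (Finset.mem_Icc.mp (h1 hx)).2
  · intro x hx; exact (Finset.mem_Icc.mp (h2 hx)).1
  · intro x hx; exact (Finset.mem_Icc.mp (h2 hx)).2

lemma FG_all {n : ℕ} {A B : Finset ℕ}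
    (hApos : ∀ x ∈ A, 1 ≤ x) (hAle : ∀ x ∈ A, x ≤ n)
    (hBpos : ∀ x ∈ B, 1 ≤ x) (hBle : ∀ x ∈ B, x ≤ n)
    (hsumAB : (∑ x ∈ A, x) + (∑ x ∈ B, x) = n) :
    T (Gj A B) ≤ n ∧ (∀ x ∈ GM n A B, 1 ≤ x) ∧ (GM n A B).sum = n - T (Gj A B)
    ∧ FA n (Gj A B) (GM n A B) = A ∧ FB n (Gj A B) (GM n A B) = B := by
  by_cases hst : B.card ≤ A.card
  · exact FG1 hApos hAle hBpos hBle hsumAB hst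
  · exact FG2 hApos hAle hBpos hBle hsumAB hst

lemma GF_all {n j : ℕ} {M : Multiset ℕ} (hj : T j ≤ n) (hpos : ∀ x ∈ M, 1 ≤ x)
    (hsum : M.sum = n - T j) :
    Gj (FA n j M) (FB n j M) = j ∧ GM n (FA n j M) (FB n j M) = M := by
  by_cases hc : cntf M (bb n j M + j + 1) ≤ bb n j M
  · exact GF1 hj hpos hsum hc
  · exact GF2 hj hpos hsum hc

lemma F_mem {n j : ℕ} {M : Multiset ℕ} (hj : T j ≤ n) (hpos : ∀ x ∈ M, 1 ≤ x)
    (hsum : M.sum = n - T j) : (FA n j M, FB n j M) ∈ PairsF n := by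
  have hApos : ∀ x ∈ FA n j M, 1 ≤ x := by
    intro x hx
    unfold FA at hx
    split at hx
    · exact mkSet_pos hx
    · exact mkSet_pos hx
  have hBpos : ∀ x ∈ FB n j M, 1 ≤ x := by
    intro x hx
    unfold FB at hx
    split at hx
    · exact mkSet_pos hx
    · exact mkSet_pos hx
  have hAle : ∀ x ∈ FA n j M, x ≤ n := by
    by_cases hc : cntf M (bb n j M + j + 1) ≤ bb n j M
    · exact le_FA1 hj hpos hsum hc
    · exact le_FA2 hj hpos hsum hc
  have hBle : ∀ x ∈ FB n j M, x ≤ n := by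
    by_cases hc : cntf M (bb n j M + j + 1) ≤ bb n j M
    · exact le_FB1 hj hpos hsum hc
    · exact le_FB2 hj hpos hsum hc
  have hs : (∑ x ∈ FA n j M, x) + (∑ x ∈ FB n j M, x) = n := by
    by_cases hc : cntf M (bb n j M + j + 1) ≤ bb n j M
    · exact sum_case1 hj hpos hsum hc
    · exact sum_case2 hj hpos hsum hc
  simp only [PairsF, Finset.mem_filter, Finset.mem_product, Finset.mem_powerset]
  refine ⟨⟨?_, ?_⟩, hs⟩
  · intro x hx; exact Finset.mem_Icc.mpr ⟨hApos x hx, hAle x hx⟩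
  · intro x hx; exact Finset.mem_Icc.mpr ⟨hBpos x hx, hBle x hx⟩

lemma sigma_ext_helper {n : ℕ} {j j' : ℕ} {π : Nat.Partition (n - T j)}
    {π' : Nat.Partition (n - T j')} (h1 : j' = j) (h2 : π'.parts = π.parts) :
    (⟨j', π'⟩ : Σ k, Nat.Partition (n - T k)) = ⟨j, π⟩ := by
  subst h1
  exact congrArg _ (Nat.Partition.ext h2)

lemma card_sigma_pairs (n : ℕ) :
    ∑ j ∈ (Finset.range (n+1)).filter (fun j => T j ≤ n),
      Fintype.card (Nat.Partition (n - T j)) = (PairsF n).card := by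
  classical
  have h0 : ∑ j ∈ (Finset.range (n+1)).filter (fun j => T j ≤ n),
      Fintype.card (Nat.Partition (n - T j))
      = (((Finset.range (n+1)).filter (fun j => T j ≤ n)).sigma
          (fun j => (Finset.univ : Finset (Nat.Partition (n - T j))))).card := by
    rw [Finset.card_sigma]
    apply Finset.sum_congr rfl
    intro j _
    rw [Finset.card_univ]
  rw [h0]
  refine Finset.card_bij'
    (i := fun x _ => (FA n x.1 x.2.parts, FB n x.1 x.2.parts))
    (j := fun y hy => ⟨Gj y.1 y.2,
      { parts := GM n y.1 y.2,
        parts_pos := fun {i} hi => by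
          obtain ⟨h1, h2, h3, h4, h5⟩ := mem_PairsF hy
          exact (FG_all h1 h2 h3 h4 h5).2.1 i hi
        parts_sum := by
          obtain ⟨h1, h2, h3, h4, h5⟩ := mem_PairsF hy
          exact (FG_all h1 h2 h3 h4 h5).2.2.1 }⟩) ?_ ?_ ?_ ?_
  · -- hi
    rintro ⟨j, π⟩ hx
    simp only [Finset.mem_sigma, Finset.mem_filter, Finset.mem_range] at hx
    exact F_mem hx.1.2 (fun x hx' => π.parts_pos hx') π.parts_sum
  · -- hj
    intro y hy
    obtain ⟨h1, h2, h3, h4, h5⟩ := mem_PairsF hy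
    have hT := (FG_all h1 h2 h3 h4 h5).1
    simp only [Finset.mem_sigma, Finset.mem_filter, Finset.mem_range]
    refine ⟨⟨?_, hT⟩, Finset.mem_univ _⟩
    have := le_T (Gj y.1 y.2)
    omega
  · -- left_inv
    rintro ⟨j, π⟩ hx
    simp only [Finset.mem_sigma, Finset.mem_filter, Finset.mem_range] at hx
    have hGF := GF_all hx.1.2 (fun x hx' => π.parts_pos hx') π.parts_sum
    exact sigma_ext_helper hGF.1 hGF.2
  · -- right_inv
    rintro ⟨A, B⟩ hy
    obtain ⟨h1, h2, h3, h4, h5⟩ := mem_PairsF hy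
    have hFG := FG_all h1 h2 h3 h4 h5
    simp only
    rw [hFG.2.2.2.1, hFG.2.2.2.2]

lemma mex_total (n : ℕ) :
    ∑ π : Nat.Partition n, mex π
      = ∑ j ∈ (Finset.range (n+1)).filter (fun j => T j ≤ n),
          Fintype.card (Nat.Partition (n - T j)) := by
  classical
  rw [sum_mex_eq n]
  rw [← Finset.sum_filter_add_sum_filter_not (Finset.range (n+1)) (fun j => T j ≤ n)]
  have h2 : ∑ j ∈ (Finset.range (n+1)).filter (fun j => ¬ T j ≤ n),
      ((Finset.univ : Finset (Nat.Partition n)).filter (fun π => stair j ≤ π.parts)).card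
      = 0 := by
    apply Finset.sum_eq_zero
    intro j hj
    simp only [Finset.mem_filter] at hj
    rw [stair_filter_empty (by omega)]
    rfl
  rw [h2]
  have h3 : ∀ j ∈ (Finset.range (n+1)).filter (fun j => T j ≤ n),
      ((Finset.univ : Finset (Nat.Partition n)).filter (fun π => stair j ≤ π.parts)).card
        = Fintype.card (Nat.Partition (n - T j)) := by
    intro j hj
    simp only [Finset.mem_filter] at hj
    exact card_stair_filter hj.2
  rw [Finset.sum_congr rfl h3]
  omega

end SMexAux

theorem sigma_mex_eq_D2 (n : ℕ) (hn : 0 < n) :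
    ∑ π : Nat.Partition n, mex π = D2 n := by
  rw [SMexAux.mex_total n, SMexAux.card_sigma_pairs n, ← SMexAux.card_TCDF_PairsF n,
    ← SMexAux.D2_eq_TCDF n]
end

section
/- Let p^mex(m,n) denote the number of partitions of n whose minimal excludant equals m. Then for every complex number z and positive integer n, Σ_{m≥1} p^mex(m,n) z^m = p(n) + (z−1) Σ_{m≥0} p(n − m(m+1)/2) z^m, where p(k) = 0 for k < 0. -/
open Finset

/-! ### Auxiliary machinery for the proof -/

/-- The multiset `{1, 2, ..., m}`. -/
def Tm (m : ℕ) : Multiset ℕ := (Finset.Ico 1 (m + 1)).val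

lemma Tm_nodup (m : ℕ) : (Tm m).Nodup := (Finset.Ico 1 (m + 1)).nodup

lemma mem_Tm {m k : ℕ} : k ∈ Tm m ↔ 1 ≤ k ∧ k ≤ m := by
  simp only [Tm, Finset.mem_val, Finset.mem_Ico]
  omega

lemma Tm_sum (m : ℕ) : (Tm m).sum = m * (m + 1) / 2 := by
  have h1 : ∑ i ∈ Finset.Ico 1 (m + 1), i = (Tm m).sum := by
    rw [Finset.sum_eq_multiset_sum, Multiset.map_id']
    rfl
  have hr : ∑ i ∈ Finset.range (m + 1), i = ∑ i ∈ Finset.Ico 1 (m + 1), i := by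
    rw [Finset.range_eq_Ico, Finset.sum_eq_sum_Ico_succ_bot (by omega)]
    norm_num
  have h := Finset.sum_range_id_mul_two (m + 1)
  rw [hr, h1] at h
  have h2 : m + 1 - 1 = m := rfl
  rw [h2] at h
  have h3 : (m + 1) * m = m * (m + 1) := Nat.mul_comm _ _
  rw [h3] at h
  omega

lemma mexSet_nonempty {n : ℕ} (π : Nat.Partition n) :
    {m : ℕ | 0 < m ∧ m ∉ π.parts}.Nonempty := by
  refine ⟨n + 1, Nat.succ_pos n, fun h => ?_⟩
  have := Multiset.le_sum_of_mem h
  rw [π.parts_sum] at this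
  omega

lemma mex_gt_iff {n : ℕ} (π : Nat.Partition n) (m : ℕ) :
    m < mex π ↔ ∀ k, 0 < k → k ≤ m → k ∈ π.parts := by
  have hmem := Nat.sInf_mem (mexSet_nonempty π)
  constructor
  · intro h k hk hkm
    by_contra hno
    have h2 : mex π ≤ k := Nat.sInf_le ⟨hk, hno⟩
    omega
  · intro h
    rcases Nat.lt_or_ge m (mex π) with h' | h'
    · exact h'
    · exact absurd (h (mex π) hmem.1 h') hmem.2

lemma mex_gt_iff' {n : ℕ} (π : Nat.Partition n) (m : ℕ) :
    m < mex π ↔ Tm m ≤ π.parts := by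
  rw [Multiset.le_iff_subset (Tm_nodup m), mex_gt_iff, Multiset.subset_iff]
  constructor
  · intro h k hk
    rw [mem_Tm] at hk
    exact h k hk.1 hk.2
  · intro h k h1 h2
    exact h (mem_Tm.mpr ⟨h1, h2⟩)

lemma card_gt (n m : ℕ) :
    ((Finset.univ : Finset (Nat.Partition n)).filter (fun π => m < mex π)).card
      = pz ((n : ℤ) - (m * (m + 1) / 2 : ℕ)) := by
  by_cases h : m * (m + 1) / 2 ≤ n
  · rw [pz, if_pos (by omega)]
    have htn : ((n : ℤ) - (m * (m + 1) / 2 : ℕ)).toNat = n - m * (m + 1) / 2 := by omega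
    rw [htn, ← Finset.card_univ]
    refine Finset.card_bij'
      (fun π hπ => ⟨π.parts - Tm m, ?_, ?_⟩)
      (fun σ _ => ⟨σ.parts + Tm m, ?_, ?_⟩) ?_ ?_ ?_ ?_
    · intro a ha
      exact π.parts_pos (Multiset.mem_of_le (tsub_le_self) ha)
    · have hle : Tm m ≤ π.parts := (mex_gt_iff' π m).mp (Finset.mem_filter.mp hπ).2
      have hc := tsub_add_cancel_of_le hle
      have := congrArg Multiset.sum hc
      rw [Multiset.sum_add, π.parts_sum, Tm_sum] at this
      omega
    · intro a ha
      rcases Multiset.mem_add.mp ha with h1 | h2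
      · exact σ.parts_pos h1
      · exact (mem_Tm.mp h2).1
    · rw [Multiset.sum_add, σ.parts_sum, Tm_sum]
      omega
    · intro π hπ
      exact Finset.mem_univ _
    · intro σ hσ
      refine Finset.mem_filter.mpr ⟨Finset.mem_univ _, ?_⟩
      exact (mex_gt_iff' _ m).mpr (Multiset.le_add_left _ _)
    · intro π hπ
      have hle : Tm m ≤ π.parts := (mex_gt_iff' π m).mp (Finset.mem_filter.mp hπ).2
      exact Nat.Partition.ext (tsub_add_cancel_of_le hle)
    · intro σ hσ
      exact Nat.Partition.ext (add_tsub_cancel_right _ _)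
  · have hnn : ¬ (0 : ℤ) ≤ (n : ℤ) - (m * (m + 1) / 2 : ℕ) := by omega
    rw [pz, if_neg hnn, Finset.card_eq_zero, Finset.filter_eq_empty_iff]
    intro π _
    rw [mex_gt_iff']
    intro hle
    obtain ⟨u, hu⟩ := Multiset.le_iff_exists_add.mp hle
    have h1 := congrArg Multiset.sum hu
    rw [Multiset.sum_add, π.parts_sum, Tm_sum] at h1
    omega

lemma pmex_step (n i : ℕ) :
    ((Finset.univ : Finset (Nat.Partition n)).filter (fun π => i < mex π)).card
      = pmex (i + 1) n
        + ((Finset.univ : Finset (Nat.Partition n)).filter (fun π => i + 1 < mex π)).card := by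
  rw [pmex, ← Finset.card_union_of_disjoint]
  · congr 1
    rw [← Finset.filter_or]
    apply Finset.filter_congr
    intro π _
    constructor
    · intro h
      rcases Nat.lt_or_ge (i + 1) (mex π) with h' | h'
      · exact Or.inr h'
      · exact Or.inl (by omega)
    · intro h
      rcases h with h | h <;> omega
  · rw [Finset.disjoint_left]
    intro π h1 h2
    have := (Finset.mem_filter.mp h1).2
    have := (Finset.mem_filter.mp h2).2
    omega

/-- The shifted partition function values appearing in the sum. -/
noncomputable def Aux (n i : ℕ) : ℂ := (pz ((n : ℤ) - (i * (i + 1) / 2 : ℕ)) : ℂ)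

lemma pmex_eq (n i : ℕ) : (pmex (i + 1) n : ℂ) = Aux n i - Aux n (i + 1) := by
  have h := pmex_step n i
  rw [card_gt n i, card_gt n (i + 1)] at h
  have h2 := congrArg (fun k : ℕ => (k : ℂ)) h
  simp only [Nat.cast_add] at h2
  rw [Aux, Aux]
  linear_combination -h2

lemma aux_top (n : ℕ) (hn : 0 < n) : Aux n (n + 1) = 0 := by
  have h1 : (n + 1) * 2 / 2 ≤ (n + 1) * ((n + 1) + 1) / 2 :=
    Nat.div_le_div_right (Nat.mul_le_mul_left _ (by omega))
  have h2 : n < (n + 1) * ((n + 1) + 1) / 2 := by omega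
  rw [Aux, pz, if_neg (by omega)]
  norm_num

theorem master_proposition (z : ℂ) (n : ℕ) (hn : 0 < n) :
    ∑ m ∈ Finset.Icc 1 (n + 1), (pmex m n : ℂ) * z ^ m =
      (pz n : ℂ) + (z - 1) * ∑ m ∈ Finset.range (n + 1),
        (pz ((n : ℤ) - (m * (m + 1) / 2 : ℕ)) : ℂ) * z ^ m := by
  have hA : ∀ m : ℕ, (pz ((n : ℤ) - (m * (m + 1) / 2 : ℕ)) : ℂ) = Aux n m := fun _ => rfl
  simp only [hA]
  set S : ℂ := ∑ m ∈ Finset.range (n + 1), Aux n m * z ^ m with hS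
  have hIcc : Finset.Icc 1 (n + 1) = Finset.Ico 1 (n + 2) := by
    exact (Finset.Ico_add_one_right_eq_Icc (a := 1) (b := n + 1)).symm
  rw [hIcc, Finset.sum_Ico_eq_sum_range]
  have hred : n + 2 - 1 = n + 1 := rfl
  rw [hred]
  have step : ∀ i ∈ Finset.range (n + 1),
      (pmex (1 + i) n : ℂ) * z ^ (1 + i) = (Aux n i - Aux n (i + 1)) * z ^ (i + 1) := by
    intro i _
    rw [show 1 + i = i + 1 from by omega, pmex_eq]
  rw [Finset.sum_congr rfl step]
  have split : ∑ i ∈ Finset.range (n + 1), (Aux n i - Aux n (i + 1)) * z ^ (i + 1)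
      = z * S - ((S + Aux n (n + 1) * z ^ (n + 1)) - Aux n 0 * z ^ 0) := by
    have e1 : ∑ i ∈ Finset.range (n + 1), Aux n i * z ^ (i + 1) = z * S := by
      rw [hS, Finset.mul_sum]
      apply Finset.sum_congr rfl
      intro i _
      ring
    have e2 : ∑ i ∈ Finset.range (n + 2), Aux n i * z ^ i
        = ∑ i ∈ Finset.range (n + 1), Aux n (i + 1) * z ^ (i + 1) + Aux n 0 * z ^ 0 :=
      Finset.sum_range_succ' _ (n + 1)
    have e3 : ∑ i ∈ Finset.range (n + 2), Aux n i * z ^ i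
        = S + Aux n (n + 1) * z ^ (n + 1) := Finset.sum_range_succ _ (n + 1)
    have e4 : ∑ i ∈ Finset.range (n + 1), Aux n (i + 1) * z ^ (i + 1)
        = (S + Aux n (n + 1) * z ^ (n + 1)) - Aux n 0 * z ^ 0 := by
      rw [← e3, e2]; ring
    calc ∑ i ∈ Finset.range (n + 1), (Aux n i - Aux n (i + 1)) * z ^ (i + 1)
        = ∑ i ∈ Finset.range (n + 1), Aux n i * z ^ (i + 1)
          - ∑ i ∈ Finset.range (n + 1), Aux n (i + 1) * z ^ (i + 1) := by
          rw [← Finset.sum_sub_distrib]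
          apply Finset.sum_congr rfl
          intro i _
          ring
      _ = z * S - ((S + Aux n (n + 1) * z ^ (n + 1)) - Aux n 0 * z ^ 0) := by
          rw [e1, e4]
  rw [split, aux_top n hn]
  have ha0 : Aux n 0 = (pz n : ℂ) := by
    rw [Aux]
    norm_num
  rw [ha0]
  ring
end

section
/- Let o(n) be the number of partitions of n with odd minimal excludant and e(n) the number with even minimal excludant. Then o(n) − e(n) = p(n) + 2 Σ_{m≥1} (−1)^m p(n − m(m+1)/2), where p(k)=0 for k<0. -/
open Finset

namespace MexAux

lemma sum_Icc_id (m : ℕ) : ∑ k ∈ Finset.Icc 1 m, k = m*(m+1)/2 := by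
  induction m with
  | zero => simp
  | succ m ih =>
    rw [Finset.sum_Icc_succ_top (by omega), ih]
    have h : (m+1)*(m+1+1) = m*(m+1)+2*(m+1) := by ring
    omega

lemma icc1_sum (m : ℕ) : ((Icc 1 m).val.sum) = m*(m+1)/2 := by
  have := sum_Icc_id m
  rwa [Finset.sum_eq_multiset_sum, Multiset.map_id'] at this

variable {n : ℕ}

lemma parts_le (π : Nat.Partition n) {a : ℕ} (ha : a ∈ π.parts) : a ≤ n := by
  have := Multiset.single_le_sum (fun x _ => Nat.zero_le x) a ha
  rw [π.parts_sum] at this; exact this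

lemma mexSet_nonempty (π : Nat.Partition n) : {m : ℕ | 0 < m ∧ m ∉ π.parts}.Nonempty :=
  ⟨n+1, Nat.succ_pos n, fun h => by have := parts_le π h; omega⟩

lemma mex_pos (π : Nat.Partition n) : 0 < mex π := (Nat.sInf_mem (mexSet_nonempty π)).1

lemma mex_notMem (π : Nat.Partition n) : mex π ∉ π.parts :=
  (Nat.sInf_mem (mexSet_nonempty π)).2

lemma mex_le (π : Nat.Partition n) : mex π ≤ n + 1 :=
  Nat.sInf_le ⟨Nat.succ_pos n, fun h => by have := parts_le π h; omega⟩

lemma le_mex_iff (π : Nat.Partition n) (m : ℕ) :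
    m + 1 ≤ mex π ↔ ∀ k ∈ Icc 1 m, k ∈ π.parts := by
  constructor
  · intro h k hk
    rw [mem_Icc] at hk
    by_contra hc
    have := Nat.sInf_le (s := {m : ℕ | 0 < m ∧ m ∉ π.parts}) ⟨by omega, hc⟩
    rw [← mex] at this  -- mex def
    omega
  · intro h
    by_contra hc
    push_neg at hc
    have h1 := mex_pos π
    have h2 := mex_notMem π
    exact h2 (h _ (mem_Icc.mpr ⟨h1, by omega⟩))

lemma icc1_le_parts (m : ℕ) (π : Nat.Partition n) (h : ∀ k ∈ Icc 1 m, k ∈ π.parts) :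
    (Icc 1 m).val ≤ π.parts := by
  rw [Multiset.le_iff_count]
  intro a
  by_cases ha : a ∈ Icc 1 m
  · rw [Multiset.count_eq_one_of_mem (Icc 1 m).nodup ha]
    exact Multiset.one_le_count_iff_mem.mpr (h a ha)
  · rw [Multiset.count_eq_zero_of_notMem ha]
    exact Nat.zero_le _

lemma msum_le_of_le {s t : Multiset ℕ} (h : s ≤ t) : s.sum ≤ t.sum := by
  obtain ⟨u, rfl⟩ := Multiset.le_iff_exists_add.mp h
  simp

/-- add parts 1..m to a partition of n - T m -/
def addParts (m : ℕ) (hT : m*(m+1)/2 ≤ n) (π : Nat.Partition (n - m*(m+1)/2)) :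
    Nat.Partition n where
  parts := π.parts + (Icc 1 m).val
  parts_pos := by
    intro a ha
    rcases Multiset.mem_add.mp ha with h | h
    · exact π.parts_pos h
    · have := mem_Icc.mp (Finset.mem_val.mp h)
      omega
  parts_sum := by
    rw [Multiset.sum_add, π.parts_sum, icc1_sum]
    omega

def subParts (m : ℕ) (π : Nat.Partition n) (h : (Icc 1 m).val ≤ π.parts) :
    Nat.Partition (n - m*(m+1)/2) where
  parts := π.parts - (Icc 1 m).val
  parts_pos := fun ha => π.parts_pos (Multiset.mem_of_le (Multiset.sub_le_self _ _) ha)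
  parts_sum := by
    have h2 : (π.parts - (Icc 1 m).val) + (Icc 1 m).val = π.parts := tsub_add_cancel_of_le h
    have h3 := congrArg Multiset.sum h2
    rw [Multiset.sum_add, π.parts_sum, icc1_sum] at h3
    omega

noncomputable def C (n m : ℕ) : ℕ :=
  ((univ : Finset (Nat.Partition n)).filter (fun π => ∀ k ∈ Icc 1 m, k ∈ π.parts)).card

lemma C_eq_card (m : ℕ) (hT : m*(m+1)/2 ≤ n) :
    C n m = Fintype.card (Nat.Partition (n - m*(m+1)/2)) := by
  classical
  rw [← Finset.card_univ]
  refine Finset.card_bij'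
    (fun π hπ => subParts m π (icc1_le_parts m π (by simpa using hπ)))
    (fun π _ => addParts m hT π) (fun _ _ => mem_univ _) ?_ ?_ ?_
  · intro π hπ
    simp only [mem_filter, mem_univ, true_and]
    intro k hk
    show k ∈ π.parts + (Icc 1 m).val
    exact Multiset.mem_add.mpr (Or.inr (by simpa using hk))
  · intro π hπ
    apply Nat.Partition.ext
    show (π.parts - (Icc 1 m).val) + (Icc 1 m).val = π.parts
    exact tsub_add_cancel_of_le (icc1_le_parts m π (by simpa using hπ))
  · intro π hπ
    apply Nat.Partition.ext
    show (π.parts + (Icc 1 m).val) - (Icc 1 m).val = π.parts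
    exact add_tsub_cancel_right _ _

lemma C_eq_zero (m : ℕ) (hT : n < m*(m+1)/2) : C n m = 0 := by
  rw [C, Finset.card_eq_zero, Finset.filter_eq_empty_iff]
  intro π _
  intro h
  have hle := icc1_le_parts m π h
  have := msum_le_of_le hle
  rw [icc1_sum, π.parts_sum] at this
  omega

lemma C_eq_pz (m : ℕ) : (C n m : ℤ) = pz ((n:ℤ) - (m*(m+1)/2 : ℕ)) := by
  by_cases hT : m*(m+1)/2 ≤ n
  · rw [C_eq_card m hT, pz, if_pos (by omega)]
    have h : ((n:ℤ) - ((m*(m+1)/2 : ℕ) : ℤ)).toNat = n - m*(m+1)/2 := by omega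
    rw [h]
  · rw [C_eq_zero m (by omega), pz, if_neg (by omega)]

lemma filter_le_mex_card (m : ℕ) :
    ((univ : Finset (Nat.Partition n)).filter (fun π => m + 1 ≤ mex π)).card = C n m := by
  classical
  rw [C]
  congr 1
  apply Finset.filter_congr
  intro π _
  exact le_mex_iff π m

lemma C_split (m : ℕ) : (C n m : ℤ) = pmex (m+1) n + C n (m+1) := by
  classical
  have hset : (univ : Finset (Nat.Partition n)).filter (fun π => m + 1 ≤ mex π)
      = (univ.filter (fun π : Nat.Partition n => mex π = m+1))
        ∪ (univ.filter (fun π : Nat.Partition n => m + 2 ≤ mex π)) := by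
    ext π
    simp only [mem_filter, mem_union, mem_univ, true_and]
    omega
  have hdisj : Disjoint (univ.filter (fun π : Nat.Partition n => mex π = m+1))
      (univ.filter (fun π : Nat.Partition n => m + 2 ≤ mex π)) := by
    rw [Finset.disjoint_left]
    intro π h1 h2
    simp only [mem_filter, mem_univ, true_and] at h1 h2
    omega
  have := Finset.card_union_of_disjoint hdisj
  rw [← hset, filter_le_mex_card] at this
  rw [this, filter_le_mex_card, pmex]
  push_cast
  ring

lemma pmex_eq (m : ℕ) (hm : 1 ≤ m) :
    (pmex m n : ℤ) = pz ((n:ℤ) - ((m-1)*(m-1+1)/2 : ℕ)) - pz ((n:ℤ) - (m*(m+1)/2 : ℕ)) := by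
  obtain ⟨k, rfl⟩ : ∃ k, m = k + 1 := ⟨m - 1, by omega⟩
  have h := C_split (n := n) k
  have h1 := C_eq_pz (n := n) k
  have h2 := C_eq_pz (n := n) (k+1)
  simp only [Nat.add_sub_cancel]
  omega

lemma card_filter_mex (p : ℕ → Prop) [DecidablePred p] [DecidablePred fun π : Nat.Partition n => p (mex π)] :
    ((univ : Finset (Nat.Partition n)).filter (fun π => p (mex π))).card
      = ∑ m ∈ Icc 1 (n+1), if p m then pmex m n else 0 := by
  classical
  rw [Finset.card_eq_sum_card_fiberwise (f := mex) (t := Icc 1 (n+1))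
    (fun π _ => mem_Icc.mpr ⟨mex_pos π, mex_le π⟩)]
  refine Finset.sum_congr rfl fun m hm => ?_
  by_cases hp : p m
  · rw [if_pos hp, pmex]
    congr 1
    ext π
    simp only [mem_filter, mem_univ, true_and]
    constructor
    · rintro ⟨_, h⟩; exact h
    · rintro h; exact ⟨h ▸ hp, h⟩
  · rw [if_neg hp, Finset.card_eq_zero, Finset.filter_eq_empty_iff]
    intro π hπ
    simp only [mem_filter, mem_univ, true_and] at hπ
    intro h
    exact hp (h ▸ hπ)

lemma telescope (B : ℕ → ℤ) (M : ℕ) :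
    ∑ m ∈ Icc 1 (M+1), (-1:ℤ)^(m+1) * (B (m-1) - B m)
      = B 0 + 2 * ∑ m ∈ Icc 1 M, (-1:ℤ)^m * B m + (-1:ℤ)^(M+1) * B (M+1) := by
  induction M with
  | zero => simp; ring
  | succ M ih =>
    rw [Finset.sum_Icc_succ_top (by omega : 1 ≤ M + 1 + 1), ih,
      Finset.sum_Icc_succ_top (by omega : 1 ≤ M + 1)]
    simp only [Nat.add_sub_cancel, pow_succ]
    ring

end MexAux

theorem odd_minus_even_mex (n : ℕ) (hn : 0 < n) :
    ((Finset.univ.filter (fun π : Nat.Partition n => Odd (mex π))).card : ℤ) -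
      (Finset.univ.filter (fun π : Nat.Partition n => Even (mex π))).card =
    (pz n : ℤ) + 2 * ∑ m ∈ Finset.Icc 1 n,
      (-1 : ℤ) ^ m * pz ((n : ℤ) - (m * (m + 1) / 2 : ℕ)) := by
  classical
  have hodd := MexAux.card_filter_mex (n := n) Odd
  have heven := MexAux.card_filter_mex (n := n) Even
  rw [hodd, heven]
  set B : ℕ → ℤ := fun m => (pz ((n:ℤ) - (m*(m+1)/2 : ℕ)) : ℤ) with hB
  have key : ∀ m ∈ Icc 1 (n+1),
      (((if Odd m then pmex m n else 0) : ℕ) : ℤ) - ((if Even m then pmex m n else 0 : ℕ) : ℤ)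
        = (-1:ℤ)^(m+1) * (B (m-1) - B m) := by
    intro m hm
    rw [mem_Icc] at hm
    have hp : (pmex m n : ℤ) = B (m-1) - B m := by
      simpa [hB] using MexAux.pmex_eq (n := n) m hm.1
    rcases Nat.even_or_odd m with he | ho
    · rw [if_neg (Nat.not_odd_iff_even.mpr he), if_pos he,
        Odd.neg_one_pow (Even.add_one he), hp]
      push_cast
      ring
    · rw [if_pos ho, if_neg (Nat.not_even_iff_odd.mpr ho),
        Even.neg_one_pow (Odd.add_one ho), hp]
      push_cast
      ring
  rw [Nat.cast_sum, Nat.cast_sum, ← Finset.sum_sub_distrib, Finset.sum_congr rfl key,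
    MexAux.telescope B n]
  have hB0 : B 0 = (pz n : ℤ) := by simp [hB]
  have hBn : B (n+1) = 0 := by
    have h : (n+1)*(n+1+1) = n*n+3*n+2 := by ring
    have hlt : n < (n+1)*(n+1+1)/2 := by omega
    simp only [hB]
    rw [pz, if_neg (by omega)]
    simp
  rw [hB0, hBn]
  ring
end

section
/- For positive integers k and n, Σ_{π ⊢ n} (mex(π))^k = Σ_{m≥0} ((m+1)^k − m^k) · p(n − m(m+1)/2), with p(j)=0 for j<0. -/
open Finset

def Smul (m : ℕ) : Multiset ℕ := (Multiset.range m).map (· + 1)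

lemma Smul_sum (m : ℕ) : (Smul m).sum = m * (m + 1) / 2 := by
  induction m with
  | zero => rfl
  | succ m ih =>
    have h1 : Smul (m+1) = (m+1) ::ₘ Smul m := by
      simp [Smul, Multiset.range_succ]
    have h2 : (m+1) * (m+1+1) = m * (m+1) + 2 * (m+1) := by ring
    rw [h1, Multiset.sum_cons, ih]
    omega

lemma Smul_nodup (m : ℕ) : (Smul m).Nodup :=
  (Multiset.nodup_range m).map (fun a b => by omega)

lemma mex_mem {n : ℕ} (π : Nat.Partition n) : 0 < mex π ∧ mex π ∉ π.parts := by
  have hne : {m : ℕ | 0 < m ∧ m ∉ π.parts}.Nonempty := by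
    refine ⟨n + 1, Nat.succ_pos n, fun h => ?_⟩
    have := Multiset.single_le_sum (fun x _ => Nat.zero_le x) _ h
    rw [π.parts_sum] at this; omega
  exact Nat.sInf_mem hne

lemma lt_mex_iff {n : ℕ} (π : Nat.Partition n) (m : ℕ) :
    m < mex π ↔ ∀ i, 0 < i → i ≤ m → i ∈ π.parts := by
  constructor
  · intro h i hi him
    by_contra hni
    have := Nat.sInf_le (s := {m : ℕ | 0 < m ∧ m ∉ π.parts}) ⟨hi, hni⟩
    rw [← mex] at *; omega
  · intro h
    by_contra h'
    obtain ⟨hp, hnp⟩ := mex_mem π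
    exact hnp (h _ hp (by omega))

lemma Smul_le_parts {n m : ℕ} (π : Nat.Partition n) (h : m < mex π) :
    Smul m ≤ π.parts := by
  rw [Multiset.le_iff_subset (Smul_nodup m)]
  intro i hi
  simp only [Smul, Multiset.mem_map, Multiset.mem_range] at hi
  obtain ⟨j, hj, rfl⟩ := hi
  exact (lt_mex_iff π m).1 h _ (by omega) (by omega)

lemma mex_le {n : ℕ} (π : Nat.Partition n) : mex π ≤ n + 1 := by
  by_contra h
  have : n + 1 ∈ π.parts := (lt_mex_iff π (n+1)).1 (by omega) _ (by omega) le_rfl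
  have := Multiset.single_le_sum (fun x _ => Nat.zero_le x) _ this
  rw [π.parts_sum] at this; omega

noncomputable def pequiv (m n : ℕ) (hT : m * (m + 1) / 2 ≤ n) :
    {π : Nat.Partition n // m < mex π} ≃ Nat.Partition (n - m * (m + 1) / 2) where
  toFun π := ⟨π.1.parts - Smul m,
    fun {i} hi => π.1.parts_pos (Multiset.mem_of_le (Multiset.sub_le_self _ _) hi), by
      have hle := Smul_le_parts π.1 π.2
      have hc := tsub_add_cancel_of_le hle
      have hsum : (π.1.parts - Smul m).sum + (Smul m).sum = n := by
        rw [← Multiset.sum_add, hc, π.1.parts_sum]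
      rw [Smul_sum] at hsum
      omega⟩
  invFun π' := ⟨⟨π'.parts + Smul m,
    fun {i} hi => by
      rcases Multiset.mem_add.1 hi with h | h
      · exact π'.parts_pos h
      · simp only [Smul, Multiset.mem_map, Multiset.mem_range] at h
        obtain ⟨j, _, rfl⟩ := h; omega, by
      rw [Multiset.sum_add, π'.parts_sum, Smul_sum]; omega⟩, by
    rw [lt_mex_iff]
    intro i hi him
    show i ∈ π'.parts + Smul m
    rw [Multiset.mem_add]
    right
    simp only [Smul, Multiset.mem_map, Multiset.mem_range]
    exact ⟨i - 1, by omega, by omega⟩⟩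
  left_inv π := by
    apply Subtype.ext
    apply Nat.Partition.ext
    exact tsub_add_cancel_of_le (Smul_le_parts π.1 π.2)
  right_inv π' := by
    apply Nat.Partition.ext
    exact add_tsub_cancel_right _ _

lemma count_lemma (m n : ℕ) :
    ((univ : Finset (Nat.Partition n)).filter (fun π => m < mex π)).card
      = pz ((n : ℤ) - (m * (m + 1) / 2 : ℕ)) := by
  set T := m * (m + 1) / 2 with hTdef
  by_cases hT : T ≤ n
  · rw [pz, if_pos (by push_cast; omega)]
    have htn : ((n : ℤ) - (T : ℤ)).toNat = n - T := by omega
    rw [htn, ← Fintype.card_subtype, Fintype.card_congr (pequiv m n hT)]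
  · rw [pz, if_neg (by push_cast; omega)]
    rw [Finset.card_eq_zero, Finset.filter_eq_empty_iff]
    intro π _ h
    have hle := Smul_le_parts π h
    have hc := tsub_add_cancel_of_le hle
    have hsum : (π.parts - Smul m).sum + (Smul m).sum = n := by
      rw [← Multiset.sum_add, hc, π.parts_sum]
    rw [Smul_sum] at hsum
    omega

lemma telescope {n : ℕ} (k : ℕ) (hk : 0 < k) (π : Nat.Partition n) :
    (mex π) ^ k = ∑ m ∈ Finset.range (n + 1),
      ((m + 1) ^ k - m ^ k) * (if m < mex π then 1 else 0) := by
  have h1 : ∀ m ∈ Finset.range (n+1), ((m + 1) ^ k - m ^ k) * (if m < mex π then 1 else 0)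
      = if m < mex π then ((m + 1) ^ k - m ^ k) else 0 := by
    intro m _; split <;> simp
  rw [Finset.sum_congr rfl h1, ← Finset.sum_filter]
  have h2 : (Finset.range (n+1)).filter (· < mex π) = Finset.range (mex π) := by
    ext x
    simp only [Finset.mem_filter, Finset.mem_range]
    have := mex_le π
    omega
  rw [h2, Finset.sum_range_tsub (f := fun m => m ^ k)
    (fun a b hab => Nat.pow_le_pow_left hab k)]
  rw [Nat.zero_pow hk, Nat.sub_zero]

theorem kth_moment_mex (k n : ℕ) (hk : 0 < k) (hn : 0 < n) :
    ∑ π : Nat.Partition n, (mex π) ^ k =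
      ∑ m ∈ Finset.range (n + 1),
        ((m + 1) ^ k - m ^ k) * pz ((n : ℤ) - (m * (m + 1) / 2 : ℕ)) := by
  calc ∑ π : Nat.Partition n, (mex π) ^ k
      = ∑ π : Nat.Partition n, ∑ m ∈ Finset.range (n + 1),
          ((m + 1) ^ k - m ^ k) * (if m < mex π then 1 else 0) := by
        exact Finset.sum_congr rfl fun π _ => telescope k hk π
    _ = ∑ m ∈ Finset.range (n + 1), ∑ π : Nat.Partition n,
          ((m + 1) ^ k - m ^ k) * (if m < mex π then 1 else 0) := Finset.sum_comm
    _ = ∑ m ∈ Finset.range (n + 1),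
          ((m + 1) ^ k - m ^ k) * pz ((n : ℤ) - (m * (m + 1) / 2 : ℕ)) := by
        refine Finset.sum_congr rfl fun m _ => ?_
        rw [← Finset.mul_sum, ← count_lemma m n, Finset.card_filter]
end

section
/- For positive integers k and n, the sum of mex(π)^k over partitions π of n with mex(π) odd equals Σ_{m≥0} (δ_m (m+1)^k − (1−δ_m) m^k) p(n − m(m+1)/2), where δ_m = 1 if m is even and 0 if m is odd, and p(j)=0 for j<0. -/
open Finset

/-! ### Auxiliary development -/

/-- The predicate that a partition of `n` contains every part `1,…,m`. -/
def Pm {n : ℕ} (m : ℕ) (π : Nat.Partition n) : Prop :=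
  ∀ i ∈ Finset.Icc 1 m, i ∈ π.parts

instance {n m : ℕ} : DecidablePred (Pm (n := n) m) := fun _ => by unfold Pm; infer_instance

lemma icc_sum2 (m : ℕ) : (∑ i ∈ Finset.Icc 1 m, i) * 2 = m * (m+1) := by
  induction m with
  | zero => simp
  | succ m ih =>
    rw [Finset.sum_Icc_succ_top (by omega), add_mul, ih]
    ring

lemma icc_sum (m : ℕ) : ∑ i ∈ Finset.Icc 1 m, i = m * (m+1) / 2 := by
  have := icc_sum2 m
  omega

lemma icc_val_sum (m : ℕ) : ((Finset.Icc 1 m).val.sum) = m * (m+1) / 2 := by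
  simpa using icc_sum m

lemma Pm_le {n m : ℕ} {π : Nat.Partition n} (h : Pm m π) :
    (Finset.Icc 1 m).val ≤ π.parts := by
  rw [Multiset.le_iff_subset (Finset.Icc 1 m).nodup]
  intro a ha
  exact h a ha

lemma Pm_anti {n j : ℕ} {π : Nat.Partition n} (h : Pm (j+1) π) : Pm j π :=
  fun i hi => h i (Finset.Icc_subset_Icc_right (by omega) hi)

/-- The number of partitions of `n` containing all parts `1,…,m`. -/
noncomputable def Nc (n m : ℕ) : ℕ :=
  (univ.filter (fun π : Nat.Partition n => Pm m π)).card

noncomputable def eqv {n m : ℕ} (hm : m*(m+1)/2 ≤ n) :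
    {π : Nat.Partition n // Pm m π} ≃ Nat.Partition (n - m*(m+1)/2) where
  toFun π :=
    { parts := π.1.parts - (Finset.Icc 1 m).val
      parts_pos := fun h => π.1.parts_pos (Multiset.mem_of_le (Multiset.sub_le_self _ _) h)
      parts_sum := by
        obtain ⟨u, hu⟩ := Multiset.le_iff_exists_add.mp (Pm_le π.2)
        have h1 : π.1.parts.sum = n := π.1.parts_sum
        rw [hu, add_tsub_cancel_left]
        rw [hu, Multiset.sum_add, icc_val_sum] at h1
        omega }
  invFun σ :=
    ⟨{ parts := σ.parts + (Finset.Icc 1 m).val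
       parts_pos := fun h => by
         rcases Multiset.mem_add.mp h with h | h
         · exact σ.parts_pos h
         · simp only [Finset.mem_val, Finset.mem_Icc] at h; omega
       parts_sum := by
         rw [Multiset.sum_add, σ.parts_sum, icc_val_sum]
         omega },
     fun i hi => Multiset.mem_add.mpr (Or.inr (Finset.mem_val.mpr hi))⟩
  left_inv π := by
    apply Subtype.ext; ext1
    exact tsub_add_cancel_of_le (Pm_le π.2)
  right_inv σ := by
    ext1
    exact add_tsub_cancel_right _ _

lemma Nc_eq_pz (n m : ℕ) : Nc n m = pz ((n:ℤ) - (m*(m+1)/2 : ℕ)) := by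
  by_cases h : m*(m+1)/2 ≤ n
  · have h0 : (0:ℤ) ≤ (n:ℤ) - (m*(m+1)/2 : ℕ) := by omega
    rw [pz, if_pos h0]
    have ht : ((n:ℤ) - (m*(m+1)/2 : ℕ)).toNat = n - m*(m+1)/2 := by omega
    rw [ht, Nc, ← Fintype.card_subtype, Fintype.card_congr (eqv h)]
  · have hne : (univ.filter (fun π : Nat.Partition n => Pm m π)) = ∅ := by
      apply Finset.filter_eq_empty_iff.mpr
      intro π _ hp
      obtain ⟨u, hu⟩ := Multiset.le_iff_exists_add.mp (Pm_le hp)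
      have h1 : π.parts.sum = n := π.parts_sum
      rw [hu, Multiset.sum_add, icc_val_sum] at h1
      omega
    rw [Nc, hne, Finset.card_empty, pz, if_neg (by omega)]

lemma Nc_top (n : ℕ) : Nc n (n+1) = 0 := by
  rw [Nc_eq_pz]
  have h2 : (n+1) * 2 ≤ (n+1) * (n+1+1) := Nat.mul_le_mul_left (n+1) (by omega)
  rw [pz, if_neg (by omega)]

lemma mex_set_mem {n : ℕ} (π : Nat.Partition n) :
    (n+1) ∈ {m : ℕ | 0 < m ∧ m ∉ π.parts} := by
  refine ⟨Nat.succ_pos n, fun h => ?_⟩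
  have := Multiset.single_le_sum (fun x _ => Nat.zero_le x) _ h
  rw [π.parts_sum] at this
  omega

lemma mem_of_lt_mex {n : ℕ} (π : Nat.Partition n) {i : ℕ} (h0 : 0 < i) (h : i < mex π) :
    i ∈ π.parts := by
  by_contra hc
  have : mex π ≤ i := Nat.sInf_le (show i ∈ {m : ℕ | 0 < m ∧ m ∉ π.parts} from ⟨h0, hc⟩)
  omega

lemma mex_eq_succ_iff {n : ℕ} (π : Nat.Partition n) (j : ℕ) :
    mex π = j + 1 ↔ Pm j π ∧ ¬ Pm (j+1) π := by
  constructor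
  · intro h
    have hm := mex_mem π
    refine ⟨fun i hi => ?_, fun hp => ?_⟩
    · rw [Finset.mem_Icc] at hi
      exact mem_of_lt_mex π (by omega) (by omega)
    · exact (h ▸ hm.2) (hp (j+1) (Finset.mem_Icc.mpr ⟨by omega, le_refl _⟩))
  · rintro ⟨h1, h2⟩
    have hnotin : (j+1) ∉ π.parts := by
      intro hin
      apply h2
      intro i hi
      rw [Finset.mem_Icc] at hi
      rcases Nat.lt_or_ge i (j+1) with h | h
      · exact h1 i (Finset.mem_Icc.mpr ⟨hi.1, by omega⟩)
      · have hij : i = j+1 := by omega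
        exact hij ▸ hin
    have hle : mex π ≤ j+1 :=
      Nat.sInf_le (show (j+1) ∈ {m : ℕ | 0 < m ∧ m ∉ π.parts} from ⟨Nat.succ_pos j, hnotin⟩)
    have hm := mex_mem π
    rcases Nat.lt_or_ge (mex π) (j+1) with h | h
    · exact absurd (h1 (mex π) (Finset.mem_Icc.mpr ⟨hm.1, by omega⟩)) hm.2
    · omega

lemma filter_mex_eq (n j : ℕ) :
    (univ.filter (fun π : Nat.Partition n => mex π = j+1)) =
      univ.filter (fun π => Pm j π) \ univ.filter (fun π => Pm (j+1) π) := by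
  ext π
  simp only [Finset.mem_sdiff, Finset.mem_filter, Finset.mem_univ, true_and]
  exact mex_eq_succ_iff π j

lemma card_mex (n j : ℕ) :
    (((univ.filter (fun π : Nat.Partition n => mex π = j+1)).card : ℤ))
      = (Nc n j : ℤ) - (Nc n (j+1) : ℤ) := by
  have hsub : (univ.filter (fun π : Nat.Partition n => Pm (j+1) π)) ⊆
      univ.filter (fun π => Pm j π) := by
    intro π hπ
    simp only [Finset.mem_filter, Finset.mem_univ, true_and] at *
    exact Pm_anti hπ
  rw [filter_mex_eq, Finset.card_sdiff_of_subset hsub]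
  rw [Nat.cast_sub (Finset.card_le_card hsub)]
  rfl

theorem kth_moment_odd_mex (k n : ℕ) (hk : 0 < k) (hn : 0 < n) :
    ∑ π ∈ Finset.univ.filter (fun π : Nat.Partition n => Odd (mex π)),
        (mex π : ℤ) ^ k =
      ∑ m ∈ Finset.range (n + 1),
        ((if Even m then (1 : ℤ) else 0) * (m + 1) ^ k -
          (1 - if Even m then (1 : ℤ) else 0) * m ^ k) *
          pz ((n : ℤ) - (m * (m + 1) / 2 : ℕ)) := by
  classical
  set s := Finset.univ.filter (fun π : Nat.Partition n => Odd (mex π)) with hs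
  -- fiberwise decomposition of the LHS over the value of mex
  have hmaps : ∀ π ∈ s, mex π ∈ Finset.range (n+2) := fun π _ =>
    Finset.mem_range.mpr (by have := mex_le π; omega)
  rw [← Finset.sum_fiberwise_of_maps_to hmaps]
  -- compute each fiber
  have hfiber : ∀ m, (∑ π ∈ s.filter (fun π => mex π = m), ((mex π : ℤ)) ^ k)
      = if Odd m then ((m:ℤ)) ^ k *
          ((univ.filter (fun π : Nat.Partition n => mex π = m)).card : ℤ) else 0 := by
    intro m
    rw [hs, Finset.filter_filter]
    by_cases hm : Odd m
    · rw [if_pos hm]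
      have hfe : (univ.filter (fun π : Nat.Partition n => Odd (mex π) ∧ mex π = m)) =
          univ.filter (fun π => mex π = m) := by
        ext π
        simp only [Finset.mem_filter, Finset.mem_univ, true_and]
        exact ⟨fun h => h.2, fun h => ⟨by rw [h]; exact hm, h⟩⟩
      rw [hfe]
      rw [Finset.sum_congr rfl (fun π hπ => by
        rw [(Finset.mem_filter.mp hπ).2])]
      rw [Finset.sum_const, nsmul_eq_mul, mul_comm]
    · rw [if_neg hm]
      have he : (univ.filter (fun π : Nat.Partition n => Odd (mex π) ∧ mex π = m)) = ∅ := by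
        apply Finset.filter_false_of_mem
        intro π _ h
        exact hm (h.2 ▸ h.1)
      rw [he, Finset.sum_empty]
  rw [Finset.sum_congr rfl (fun m _ => hfiber m)]
  -- peel off the m = 0 term (which vanishes) and reindex
  rw [Finset.sum_range_succ' _ (n+1)]
  simp only [Nat.odd_add_one, Nat.not_odd_iff_even, Nat.even_add_one, Nat.not_even_iff_odd]
  rw [if_neg (by decide : ¬ Odd 0), add_zero]
  have hR : ∀ m ∈ Finset.range (n+1),
      ((if Even m then (1:ℤ) else 0) * ((m:ℤ) + 1)^k - (1 - if Even m then (1:ℤ) else 0) * (m:ℤ)^k)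
          * (pz ((n:ℤ) - (m*(m+1)/2 : ℕ)) : ℤ)
        = (if Even m then ((m+1:ℕ):ℤ)^k * (Nc n m : ℤ) else 0)
            - (if Even m then 0 else (m:ℤ)^k * (Nc n m : ℤ)) := by
    intro m _
    rw [← Nc_eq_pz]
    by_cases h : Even m
    · simp only [if_pos h]
      push_cast
      ring
    · simp only [if_neg h]
      push_cast
      ring
  rw [Finset.sum_congr rfl hR, Finset.sum_sub_distrib]
  have hL : ∀ x ∈ Finset.range (n+1),
      (if Even x then ((x+1:ℕ):ℤ)^k * ((univ.filter (fun π : Nat.Partition n => mex π = x+1)).card : ℤ) else 0)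
        = (if Even x then ((x+1:ℕ):ℤ)^k * (Nc n x : ℤ) else 0)
            - (if Even x then ((x+1:ℕ):ℤ)^k * (Nc n (x+1) : ℤ) else 0) := by
    intro x _
    by_cases h : Even x
    · simp only [if_pos h]
      rw [card_mex]
      ring
    · simp [h]
  rw [Finset.sum_congr rfl hL, Finset.sum_sub_distrib]
  congr 1
  rw [Finset.sum_range_succ, Nc_top, Finset.sum_range_succ' _ n]
  simp only [Nat.cast_zero, mul_zero, if_pos (Even.zero), add_zero, ite_self]
  apply Finset.sum_congr rfl
  intro i _
  by_cases h : Even i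
  · rw [if_pos h, if_neg (by simpa [Nat.even_add_one] using h)]
  · rw [if_neg h, if_pos (by simpa [Nat.even_add_one] using h)]
end
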